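/- arXiv:1301.0810 — 10 statements merged into one kernel-verified Lean document; each statement's English description precedes it below -/
import Mathlib

section
/- Let X be a finite-dimensional real normed space with dual X*, and let A ⊂ X be a nonempty closed set such that the recession cone P := (cl conv A)_∞ of the closed convex hull of A is pointed. Then int P⁻ = int(dom σ_A) ≠ ∅, the support function σ_A is continuous on int P⁻, and for every x* ∈ int P⁻ the subdifferential ∂σ_A(x*) is nonempty, convex and compact. -/
open Set Filter Topology Pointwise

set_option maxHeartbeats 1000000
set_option synthInstance.maxHeartbeats 400000

variable {X : Type*} [NormedAddCommGroup X] [NormedSpace ℝ X]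

/-- The support function `σ_A : X* → ℝ ∪ {+∞}`, `σ_A(x*) = sup {⟨a, x*⟩ : a ∈ A}`,
taking values in `EReal`. -/
noncomputable def supportFn (A : Set X) (f : X →L[ℝ] ℝ) : EReal :=
  ⨆ a ∈ A, (f a : EReal)

/-- The recession cone `S_∞` of a set `S`. -/
def recessionCone (S : Set X) : Set X :=
  {u | ∃ t : ℕ → ℝ, (∀ n, 0 < t n) ∧ Tendsto t atTop (𝓝 0) ∧
       ∃ a : ℕ → X, (∀ n, a n ∈ S) ∧ Tendsto (fun n => t n • a n) atTop (𝓝 u)}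

/-- The negative dual cone `P⁻ = {x* : ⟨x, x*⟩ ≤ 0 for all x ∈ P}`. -/
def negDual (P : Set X) : Set (X →L[ℝ] ℝ) := {f | ∀ x ∈ P, f x ≤ 0}

/-- The subdifferential of the support function of `A` at `f`:
`{u : ⟨u, g - f⟩ ≤ σ_A(g) - σ_A(f) for all g}` (empty when `σ_A(f) = +∞`). -/
def subdiff (A : Set X) (f : X →L[ℝ] ℝ) : Set X :=
  {u | supportFn A f ≠ ⊤ ∧
       ∀ g : X →L[ℝ] ℝ, supportFn A f + ((g u - f u : ℝ) : EReal) ≤ supportFn A g}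

/-! ### Auxiliary lemmas -/

/-- The convex hull of a nonempty compact set in a finite-dimensional normed space is compact. -/
lemma aux_isCompact_convexHull {E : Type*} [NormedAddCommGroup E] [NormedSpace ℝ E]
    [FiniteDimensional ℝ E] {K : Set E} (hK : IsCompact K) (hKne : K.Nonempty) :
    IsCompact (convexHull ℝ K) := by
  classical
  obtain ⟨x₀, hx₀⟩ := hKne
  set n := Module.finrank ℝ E + 1 with hn
  set μ : ((Fin n → ℝ) × (Fin n → E)) → E := fun p => ∑ i, p.1 i • p.2 i with hμ
  have hμcont : Continuous μ := continuous_finset_sum _ fun i _ =>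
    ((continuous_apply i).comp continuous_fst).smul ((continuous_apply i).comp continuous_snd)
  have hco : IsCompact ((stdSimplex ℝ (Fin n)) ×ˢ (Set.pi Set.univ fun _ : Fin n => K)) :=
    (isCompact_stdSimplex (𝕜 := ℝ) (ι := Fin n)).prod (isCompact_univ_pi fun _ => hK)
  have himg : convexHull ℝ K = μ '' ((stdSimplex ℝ (Fin n)) ×ˢ (Set.pi Set.univ fun _ : Fin n => K)) := by
    apply Subset.antisymm
    · intro x hx
      rw [convexHull_eq_union] at hx
      simp only [Set.mem_iUnion] at hx
      obtain ⟨t, htK, hti, hxt⟩ := hx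
      have hcard : t.card ≤ n := by
        have h1 := hti.card_le_finrank_succ
        have h2 : Module.finrank ℝ (vectorSpan ℝ (Set.range ((↑) : t → E))) ≤
            Module.finrank ℝ E := Submodule.finrank_le _
        simp only [Fintype.card_coe] at h1
        omega
      rw [Finset.convexHull_eq] at hxt
      obtain ⟨w, hw0, hw1, hwx⟩ := hxt
      rw [Finset.centerMass_eq_of_sum_1 _ _ hw1] at hwx
      set e : Fin t.card ≃ t := t.equivFin.symm with he
      set W : Fin n → ℝ := fun j => if h : (j : ℕ) < t.card then w (e ⟨j, h⟩) else 0 with hW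
      set Z : Fin n → E := fun j => if h : (j : ℕ) < t.card then (e ⟨j, h⟩ : E) else x₀ with hZ
      set emb : Fin t.card ↪ Fin n :=
        ⟨fun i => Fin.castLE hcard i, fun a b h => by
          apply Fin.ext; simpa [Fin.ext_iff] using h⟩ with hemb
      have hsplit : ∀ (g : Fin n → E), (∀ j : Fin n, ¬((j : ℕ) < t.card) → g j = 0) →
          ∑ j, g j = ∑ i : Fin t.card, g (Fin.castLE hcard i) := by
        intro g hg
        have h1 : ∑ i : Fin t.card, g (Fin.castLE hcard i) = ∑ j ∈ Finset.univ.map emb, g j := by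
          rw [Finset.sum_map]
          rfl
        rw [h1]
        symm
        apply Finset.sum_subset (Finset.subset_univ _)
        intro j _ hj
        apply hg
        intro hlt
        exact hj (Finset.mem_map.2 ⟨⟨(j : ℕ), hlt⟩, Finset.mem_univ _, by
          apply Fin.ext; simp [hemb]; rfl⟩)
      have hsplitR : ∀ (g : Fin n → ℝ), (∀ j : Fin n, ¬((j : ℕ) < t.card) → g j = 0) →
          ∑ j, g j = ∑ i : Fin t.card, g (Fin.castLE hcard i) := by
        intro g hg
        have h1 : ∑ i : Fin t.card, g (Fin.castLE hcard i) = ∑ j ∈ Finset.univ.map emb, g j := by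
          rw [Finset.sum_map]
          rfl
        rw [h1]
        symm
        apply Finset.sum_subset (Finset.subset_univ _)
        intro j _ hj
        apply hg
        intro hlt
        exact hj (Finset.mem_map.2 ⟨⟨(j : ℕ), hlt⟩, Finset.mem_univ _, by
          apply Fin.ext; simp [hemb]; rfl⟩)
      have hWcast : ∀ i : Fin t.card, W (Fin.castLE hcard i) = w (e i) := by
        intro i
        have h : ((Fin.castLE hcard i : Fin n) : ℕ) < t.card := by simpa using i.2
        rw [hW]
        exact dif_pos h
      have hZcast : ∀ i : Fin t.card, Z (Fin.castLE hcard i) = (e i : E) := by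
        intro i
        have h : ((Fin.castLE hcard i : Fin n) : ℕ) < t.card := by simpa using i.2
        rw [hZ]
        exact dif_pos h
      have hW1 : ∑ j, W j = 1 := by
        rw [hsplitR W (fun j hj => by rw [hW]; exact dif_neg hj)]
        calc ∑ i : Fin t.card, W (Fin.castLE hcard i) = ∑ i : Fin t.card, w (e i) :=
              Finset.sum_congr rfl fun i _ => hWcast i
          _ = ∑ x : t, w x := Equiv.sum_comp e (fun x : t => w (x : E))
          _ = ∑ x ∈ t, w x := Finset.sum_coe_sort t w
          _ = 1 := hw1
      have hWZ : ∑ j, W j • Z j = x := by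
        rw [hsplit (fun j => W j • Z j) (fun j hj => by
          rw [hW]; simp only [dif_neg hj, zero_smul])]
        calc ∑ i : Fin t.card, W (Fin.castLE hcard i) • Z (Fin.castLE hcard i)
            = ∑ i : Fin t.card, w (e i) • (e i : E) :=
              Finset.sum_congr rfl fun i _ => by rw [hWcast, hZcast]
          _ = ∑ x : t, w (x : E) • (x : E) := Equiv.sum_comp e (fun x : t => w (x : E) • (x : E))
          _ = ∑ x ∈ t, w x • x := Finset.sum_coe_sort t (fun x => w x • x)
          _ = x := hwx
      refine ⟨(W, Z), ⟨⟨?_, hW1⟩, ?_⟩, hWZ⟩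
      · intro j
        rw [hW]
        by_cases h : (j : ℕ) < t.card
        · simp only [dif_pos h]
          exact hw0 _ (e ⟨j, h⟩).2
        · simp only [dif_neg h, le_refl]
      · intro j _
        rw [hZ]
        by_cases h : (j : ℕ) < t.card
        · simp only [dif_pos h]
          exact htK (e ⟨j, h⟩).2
        · simp only [dif_neg h]
          exact hx₀
    · rintro _ ⟨⟨w, z⟩, ⟨hw, hz⟩, rfl⟩
      exact mem_convexHull_of_exists_fintype w z hw.1 hw.2 (fun i => hz i (Set.mem_univ i)) rfl
  rw [himg]
  exact hco.image hμcont

lemma recessionCone_mono {S T : Set X} (h : S ⊆ T) : recessionCone S ⊆ recessionCone T := by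
  rintro u ⟨t, htp, ht0, a, haS, hta⟩
  exact ⟨t, htp, ht0, a, fun n => h (haS n), hta⟩

/-- An unbounded-norm sequence in `S` produces a unit vector in the recession cone. -/
lemma exists_unit_mem_recessionCone [FiniteDimensional ℝ X] {S : Set X} {b : ℕ → X}
    (hbS : ∀ n, b n ∈ S) (hb1 : ∀ n : ℕ, ((n : ℝ)) + 1 ≤ ‖b n‖) :
    ∃ v ∈ recessionCone S, ‖v‖ = 1 ∧ ∃ φ : ℕ → ℕ, StrictMono φ ∧
      Tendsto (fun n => ‖b (φ n)‖⁻¹ • b (φ n)) atTop (𝓝 v) := by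
  have hpos : ∀ n, (0 : ℝ) < ‖b n‖ := fun n => lt_of_lt_of_le (by positivity) (hb1 n)
  have hmem : ∀ n, ‖b n‖⁻¹ • b n ∈ Metric.sphere (0 : X) 1 := by
    intro n
    rw [mem_sphere_zero_iff_norm, norm_smul, norm_inv, norm_norm]
    exact inv_mul_cancel₀ (hpos n).ne'
  obtain ⟨v, hv, φ, hφ, htend⟩ := (isCompact_sphere (0 : X) 1).tendsto_subseq hmem
  have h1 : Tendsto (fun n => ‖b (φ n)‖) atTop atTop := by
    apply tendsto_atTop_mono (fun n => ?_) tendsto_natCast_atTop_atTop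
    have hle : (n : ℝ) ≤ (φ n : ℝ) := Nat.cast_le.2 hφ.le_apply
    calc (n : ℝ) ≤ (φ n : ℝ) + 1 := by linarith
      _ ≤ ‖b (φ n)‖ := hb1 (φ n)
  refine ⟨v, ?_, mem_sphere_zero_iff_norm.1 hv, φ, hφ, htend⟩
  exact ⟨fun n => ‖b (φ n)‖⁻¹, fun n => inv_pos.2 (hpos _), h1.inv_tendsto_atTop,
    fun n => b (φ n), fun n => hbS _, htend⟩

lemma isBounded_of_recessionCone [FiniteDimensional ℝ X] {S : Set X}
    (h : ∀ v ∈ recessionCone S, v = 0) : Bornology.IsBounded S := by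
  by_contra hb
  rw [isBounded_iff_forall_norm_le] at hb
  push_neg at hb
  have hsel : ∀ n : ℕ, ∃ x, x ∈ S ∧ (n : ℝ) + 1 ≤ ‖x‖ := by
    intro n
    obtain ⟨x, hxS, hx⟩ := hb ((n : ℝ) + 1)
    exact ⟨x, hxS, hx.le⟩
  choose b hbS hbn using hsel
  obtain ⟨v, hvrec, hv1, -⟩ := exists_unit_mem_recessionCone hbS hbn
  rw [h v hvrec] at hv1
  simp at hv1

lemma recession_nonneg {S : Set X} {f : X →L[ℝ] ℝ} {c : ℝ} (hS : ∀ x ∈ S, c ≤ f x)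
    {v : X} (hv : v ∈ recessionCone S) : 0 ≤ f v := by
  obtain ⟨t, htp, ht0, a, haS, hta⟩ := hv
  have h1 : Tendsto (fun n => f (t n • a n)) atTop (𝓝 (f v)) := (f.continuous.tendsto v).comp hta
  have h2 : Tendsto (fun n => t n * c) atTop (𝓝 0) := by simpa using ht0.mul_const c
  refine le_of_tendsto_of_tendsto' h2 h1 fun n => ?_
  rw [map_smul, smul_eq_mul]
  exact mul_le_mul_of_nonneg_left (hS _ (haS n)) (htp n).le

lemma mem_recessionCone_iff {C : Set X} (hCc : IsClosed C) (hCv : Convex ℝ C) {x₀ : X}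
    (hx₀ : x₀ ∈ C) {u : X} :
    u ∈ recessionCone C ↔ ∀ t : ℝ, 0 ≤ t → x₀ + t • u ∈ C := by
  constructor
  · rintro ⟨t, htp, ht0, a, haC, hta⟩ s hs
    have hmem : ∀ᶠ n in atTop, (1 - s * t n) • x₀ + (s * t n) • a n ∈ C := by
      have h0 : Tendsto (fun n => s * t n) atTop (𝓝 0) := by simpa using ht0.const_mul s
      have hev : ∀ᶠ n in atTop, s * t n < 1 :=
        h0.eventually_lt_const (by norm_num : (0 : ℝ) < 1)
      filter_upwards [hev] with n hn
      exact hCv hx₀ (haC n) (by linarith) (mul_nonneg hs (htp n).le) (by ring)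
    have hlim : Tendsto (fun n => (1 - s * t n) • x₀ + (s * t n) • a n) atTop
        (𝓝 (x₀ + s • u)) := by
      have heq : (fun n => (1 - s * t n) • x₀ + (s * t n) • a n)
          = fun n => (x₀ - (s * t n) • x₀) + s • (t n • a n) := by
        funext n
        module
      rw [heq]
      have h1 : Tendsto (fun n => x₀ - (s * t n) • x₀) atTop (𝓝 (x₀ - (0:ℝ) • x₀)) := by
        exact (tendsto_const_nhds (x := x₀)).sub
          ((by simpa using (ht0.const_mul s) : Tendsto (fun n => s * t n) atTop (𝓝 (0:ℝ))).smul_const x₀)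
      have := h1.add (hta.const_smul s)
      simpa using this
    exact hCc.mem_of_tendsto hlim hmem
  · intro h
    have hat : Tendsto (fun n : ℕ => (n : ℝ) + 1) atTop atTop :=
      tendsto_atTop_add_const_right _ 1 tendsto_natCast_atTop_atTop
    refine ⟨fun n => ((n : ℝ) + 1)⁻¹, fun n => by positivity, hat.inv_tendsto_atTop,
      fun n => x₀ + ((n : ℝ) + 1) • u, fun n => h _ (by positivity), ?_⟩
    have heq : (fun n : ℕ => ((n : ℝ) + 1)⁻¹ • (x₀ + ((n : ℝ) + 1) • u))
        = fun n : ℕ => ((n : ℝ) + 1)⁻¹ • x₀ + u := by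
      funext n
      have hne : ((n : ℝ) + 1) ≠ 0 := by positivity
      rw [smul_add, smul_smul, inv_mul_cancel₀ hne, one_smul]
    rw [heq]
    have := (hat.inv_tendsto_atTop.smul_const x₀).add_const u
    simpa using this

/-! ### Support function lemmas -/

lemma coe_le_supportFn {A : Set X} {f : X →L[ℝ] ℝ} {a : X} (ha : a ∈ A) :
    ((f a : ℝ) : EReal) ≤ supportFn A f :=
  le_iSup₂ (f := fun a (_ : a ∈ A) => ((f a : ℝ) : EReal)) a ha

lemma supportFn_eq_coe {A : Set X} (hA : A.Nonempty) (f : X →L[ℝ] ℝ)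
    (hbdd : BddAbove (range fun a : A => f a)) :
    supportFn A f = (((⨆ a : A, f a : ℝ)) : EReal) := by
  haveI : Nonempty A := hA.to_subtype
  rw [show supportFn A f = ⨆ a : A, ((f a : ℝ) : EReal) from iSup_subtype']
  exact (Monotone.map_ciSup_of_continuousAt (continuous_coe_real_ereal.continuousAt)
    (fun x y h => EReal.coe_le_coe_iff.2 h) hbdd).symm

lemma bddAbove_of_supportFn_ne_top {A : Set X} (f : X →L[ℝ] ℝ)
    (h : supportFn A f ≠ ⊤) : BddAbove (range fun a : A => f a) := by
  by_contra hb
  apply h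
  rw [EReal.eq_top_iff_forall_lt]
  intro r
  obtain ⟨y, hy_mem, hxy⟩ := not_bddAbove_iff.1 hb r
  obtain ⟨a, rfl⟩ := hy_mem
  exact lt_of_lt_of_le (EReal.coe_lt_coe_iff.2 hxy) (coe_le_supportFn a.2)

lemma supportFn_zero {A : Set X} (hA : A.Nonempty) : supportFn A (0 : X →L[ℝ] ℝ) = 0 := by
  apply le_antisymm
  · refine iSup₂_le fun a _ => ?_
    simp
  · obtain ⟨a, ha⟩ := hA
    have := coe_le_supportFn (f := (0 : X →L[ℝ] ℝ)) ha
    simpa using this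

lemma le_on_closure_convexHull {A : Set X} {f : X →L[ℝ] ℝ} {M : ℝ}
    (hM : ∀ a ∈ A, f a ≤ M) {c : X} (hc : c ∈ closure (convexHull ℝ A)) : f c ≤ M := by
  have hsub : closure (convexHull ℝ A) ⊆ {x | f x ≤ M} := by
    apply closure_minimal
    · exact convexHull_min hM (convex_halfSpace_le ⟨f.map_add, f.map_smul⟩ M)
    · exact isClosed_le f.continuous continuous_const
  exact hsub hc

lemma negDual_of_bdd {A : Set X} {P : Set X}
    (hP : P = recessionCone (closure (convexHull ℝ A))) {f : X →L[ℝ] ℝ} {M : ℝ}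
    (hM : ∀ a ∈ A, f a ≤ M) : f ∈ negDual P := by
  intro u hu
  rw [hP] at hu
  obtain ⟨t, htp, ht0, a, haC, hta⟩ := hu
  have h1 : Tendsto (fun n => f (t n • a n)) atTop (𝓝 (f u)) := (f.continuous.tendsto u).comp hta
  have h2 : Tendsto (fun n => t n * M) atTop (𝓝 0) := by simpa using ht0.mul_const M
  refine le_of_tendsto_of_tendsto' h1 h2 fun n => ?_
  rw [map_smul, smul_eq_mul]
  exact mul_le_mul_of_nonneg_left (le_on_closure_convexHull hM (haC n)) (htp n).le

/-- For a nonempty closed set `A` in a nontrivial finite-dimensional real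
normed space whose closed convex hull has a pointed recession cone `P`, one has
`int P⁻ = int (dom σ_A) ≠ ∅`, `σ_A` is continuous on `int P⁻`, and at every point of
`int P⁻` the subdifferential of `σ_A` is nonempty, convex and compact. -/
theorem stmt0 [FiniteDimensional ℝ X] [Nontrivial X]
    (A : Set X) (hA : A.Nonempty) (hAclosed : IsClosed A)
    (P : Set X) (hP : P = recessionCone (closure (convexHull ℝ A)))
    (hpointed : P ∩ (-P) = {0}) :
    interior (negDual P) = interior {f : X →L[ℝ] ℝ | supportFn A f < ⊤} ∧
    (interior (negDual P)).Nonempty ∧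
    ContinuousOn (supportFn A) (interior (negDual P)) ∧
    ∀ f ∈ interior (negDual P),
      (subdiff A f).Nonempty ∧ Convex ℝ (subdiff A f) ∧ IsCompact (subdiff A f) := by
  haveI : Nonempty A := hA.to_subtype
  haveI : ProperSpace X := FiniteDimensional.proper ℝ X
  obtain ⟨a₀, ha₀⟩ := id hA
  set C : Set X := closure (convexHull ℝ A) with hCdef
  have hCclosed : IsClosed C := isClosed_closure
  have hCconv : Convex ℝ C := (convex_convexHull ℝ A).closure
  have hACsub : A ⊆ C := (subset_convexHull ℝ A).trans subset_closure
  have ha₀C : a₀ ∈ C := hACsub ha₀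
  have hPmem : ∀ u, u ∈ P ↔ ∀ t : ℝ, 0 ≤ t → a₀ + t • u ∈ C := fun u => by
    rw [hP]; exact mem_recessionCone_iff hCclosed hCconv ha₀C
  have h0P : (0 : X) ∈ P := (hPmem 0).2 fun t _ => by simpa using ha₀C
  have hPsmul : ∀ (c : ℝ), 0 ≤ c → ∀ u ∈ P, c • u ∈ P := by
    intro c hc u hu
    rw [hPmem]
    intro t ht
    rw [smul_smul]
    exact (hPmem u).1 hu (t * c) (mul_nonneg ht hc)
  have hPconv : Convex ℝ P := by
    intro u hu v hv p q hp hq hpq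
    rw [hPmem]
    intro t ht
    have h1 := (hPmem u).1 hu t ht
    have h2 := (hPmem v).1 hv t ht
    have h3 := hCconv h1 h2 hp hq hpq
    have heq : p • (a₀ + t • u) + q • (a₀ + t • v)
        = (p + q) • a₀ + t • (p • u + q • v) := by module
    rw [heq, hpq, one_smul] at h3
    exact h3
  have hPclosed : IsClosed P := by
    have hPeq : P = ⋂ t : {t : ℝ // 0 ≤ t}, (fun u => a₀ + t.1 • u) ⁻¹' C := by
      ext u
      simp only [Set.mem_iInter, Set.mem_preimage, Subtype.forall]
      exact hPmem u
    rw [hPeq]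
    exact isClosed_iInter fun t =>
      hCclosed.preimage (continuous_const.add (continuous_id.const_smul t.1))
  -- strict negativity on the interior of the negative dual
  have hneg : ∀ f ∈ interior (negDual P), ∀ u ∈ P, u ≠ 0 → f u < 0 := by
    intro f hf u hu hu0
    obtain ⟨ε, hε, hball⟩ := Metric.isOpen_iff.1 isOpen_interior f hf
    obtain ⟨g, hg1, hgu⟩ := exists_dual_vector ℝ u (norm_ne_zero_iff.2 hu0)
    have hgu' : g u = ‖u‖ := by simpa using hgu
    have hmem : f + (ε / 2) • g ∈ Metric.ball f ε := by
      simp only [Metric.mem_ball, dist_eq_norm, add_sub_cancel_left]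
      have hns : ‖(ε / 2) • g‖ ≤ ‖(ε / 2 : ℝ)‖ * ‖g‖ := ContinuousLinearMap.opNorm_smul_le _ _
      rw [hg1, mul_one, Real.norm_eq_abs, abs_of_pos (half_pos hε)] at hns
      linarith
    have hg' : f + (ε / 2) • g ∈ negDual P := interior_subset (hball hmem)
    have h1 := hg' u hu
    have h2 : (f + (ε / 2) • g) u = f u + (ε / 2) * g u := by simp
    rw [h2, hgu'] at h1
    have h3 : (0:ℝ) < (ε / 2) * ‖u‖ := by
      have := norm_pos_iff.2 hu0
      positivity
    linarith
  -- interior points have support function bounded above on A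
  have hUD : ∀ f ∈ interior (negDual P), BddAbove (range fun a : A => f a) := by
    intro f hf
    by_contra hbdd
    rw [not_bddAbove_iff] at hbdd
    have hsel : ∀ n : ℕ, ∃ a, a ∈ A ∧ ‖f‖ * ((n:ℝ)+1) < f a ∧ 0 ≤ f a := by
      intro n
      obtain ⟨y, hy_mem, hxy⟩ := hbdd (max 0 (‖f‖ * ((n:ℝ)+1)))
      obtain ⟨a, rfl⟩ := hy_mem
      exact ⟨a, a.2, lt_of_le_of_lt (le_max_right _ _) hxy,
        le_of_lt (lt_of_le_of_lt (le_max_left _ _) hxy)⟩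
    choose b hbA hbf hbf0 using hsel
    have hfpos : (0:ℝ) < ‖f‖ := by
      by_contra hfle
      push_neg at hfle
      have hf0 : ‖f‖ = 0 := le_antisymm hfle (norm_nonneg f)
      have h1 := hbf 0
      have h2 := f.le_opNorm (b 0)
      rw [hf0] at h1 h2
      rw [Real.norm_eq_abs] at h2
      have h4 := le_abs_self (f (b 0))
      simp only [zero_mul] at h1 h2
      linarith
    have hb1 : ∀ n : ℕ, ((n:ℝ)) + 1 ≤ ‖b n‖ := by
      intro n
      have h1 := hbf n
      have h2 : f (b n) ≤ ‖f‖ * ‖b n‖ :=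
        le_trans (le_abs_self _) (by rw [← Real.norm_eq_abs]; exact f.le_opNorm _)
      exact le_of_lt ((mul_lt_mul_iff_right₀ hfpos).1 (lt_of_lt_of_le h1 h2))
    obtain ⟨v, hvrec, hv1, φ, hφ, htend⟩ := exists_unit_mem_recessionCone hbA hb1
    have hvP : v ∈ P := by rw [hP]; exact recessionCone_mono hACsub hvrec
    have hfv : 0 ≤ f v := by
      have h1 : Tendsto (fun n => f (‖b (φ n)‖⁻¹ • b (φ n))) atTop (𝓝 (f v)) :=
        (f.continuous.tendsto v).comp htend
      refine ge_of_tendsto h1 (Eventually.of_forall fun n => ?_)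
      rw [map_smul, smul_eq_mul]
      exact mul_nonneg (inv_nonneg.2 (norm_nonneg _)) (hbf0 _)
    have hv0 : v ≠ 0 := fun h => by rw [h] at hv1; simp at hv1
    exact absurd hfv (not_le.2 (hneg f hf v hvP hv0))
  have hdomD : ∀ f : X →L[ℝ] ℝ, supportFn A f < ⊤ ↔ BddAbove (range fun a : A => f a) := by
    intro f
    constructor
    · intro h
      exact bddAbove_of_supportFn_ne_top f h.ne
    · intro h
      rw [supportFn_eq_coe hA f h]
      exact EReal.coe_lt_top _
  have hUdom : interior (negDual P) ⊆ {f : X →L[ℝ] ℝ | supportFn A f < ⊤} :=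
    fun f hf => (hdomD f).2 (hUD f hf)
  have hdomND : {f : X →L[ℝ] ℝ | supportFn A f < ⊤} ⊆ negDual P := by
    intro f hf
    have hb := (hdomD f).1 hf
    exact negDual_of_bdd hP (fun a ha => le_ciSup hb ⟨a, ha⟩)
  have hint_eq : interior (negDual P) = interior {f : X →L[ℝ] ℝ | supportFn A f < ⊤} :=
    Subset.antisymm (interior_maximal hUdom isOpen_interior) (interior_mono hdomND)
  -- Nonempty interior, via separation
  have hne_int : (interior (negDual P)).Nonempty := by
    obtain ⟨f₀, s, hs_neg, hf₀⟩ : ∃ (f₀ : X →L[ℝ] ℝ) (s : ℝ), s < 0 ∧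
        ∀ u ∈ P, f₀ u ≤ s * ‖u‖ := by
      by_cases hK : (P ∩ Metric.sphere (0:X) 1).Nonempty
      · set K := P ∩ Metric.sphere (0:X) 1 with hKdef
        have hKP : K ⊆ P := inter_subset_left
        have hKcomp : IsCompact K := Metric.isCompact_of_isClosed_isBounded
          (hPclosed.inter Metric.isClosed_sphere)
          (Metric.isBounded_sphere.subset inter_subset_right)
        have hDco : IsCompact (convexHull ℝ K) := aux_isCompact_convexHull hKcomp hK
        have h0D : (0:X) ∉ convexHull ℝ K := by
          classical
          intro h0
          rw [mem_convexHull_iff_exists_fintype] at h0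
          obtain ⟨ι, hι, w, z, hw0, hw1, hzK, hsum⟩ := h0
          have hex : ∃ i, 0 < w i := by
            by_contra hno
            push_neg at hno
            have hz0 : ∀ i, w i = 0 := fun i => le_antisymm (hno i) (hw0 i)
            rw [Finset.sum_congr rfl fun i _ => hz0 i] at hw1
            simp at hw1
          obtain ⟨i₀, hi₀⟩ := hex
          have hPadd : ∀ a b : X, a ∈ P → b ∈ P → a + b ∈ P := by
            intro a b hu hv
            have h2 : a + b = (2:ℝ) • ((1/2 : ℝ) • a + (1/2 : ℝ) • b) := by module
            rw [h2]
            exact hPsmul 2 (by norm_num) _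
              (hPconv hu hv (by norm_num) (by norm_num) (by norm_num))
          have hPsum : ∀ (s : Finset ι), (∑ i ∈ s, w i • z i) ∈ P := by
            intro s
            refine Finset.sum_induction _ (· ∈ P) hPadd h0P fun i _ =>
              hPsmul _ (hw0 i) _ (hKP (hzK i))
          have hy : w i₀ • z i₀ ∈ P := hPsmul _ (hw0 i₀) _ (hKP (hzK i₀))
          have hny : -(w i₀ • z i₀) ∈ P := by
            have h1 : w i₀ • z i₀ + ∑ i ∈ Finset.univ.erase i₀, w i • z i = 0 := by
              rw [← hsum, Finset.add_sum_erase _ (fun i => w i • z i) (Finset.mem_univ i₀)]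
            have h2 : -(w i₀ • z i₀) = ∑ i ∈ Finset.univ.erase i₀, w i • z i :=
              neg_eq_of_add_eq_zero_right h1
            rw [h2]
            exact hPsum _
          have hz0 : w i₀ • z i₀ = 0 := by
            have hmem : w i₀ • z i₀ ∈ P ∩ (-P) := ⟨hy, by rw [Set.mem_neg]; exact hny⟩
            rw [hpointed] at hmem
            exact hmem
          have hz1 : ‖z i₀‖ = 1 := mem_sphere_zero_iff_norm.1 (hzK i₀).2
          rcases smul_eq_zero.1 hz0 with h | h
          · exact hi₀.ne' h
          · rw [h] at hz1; simp at hz1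
        obtain ⟨f, s', u', hfa, hsu, hub⟩ := geometric_hahn_banach_compact_closed
          (convex_convexHull ℝ K) hDco (convex_singleton 0) isClosed_singleton
          (disjoint_singleton_right.2 h0D)
        have h0 : u' < f 0 := hub 0 rfl
        rw [map_zero] at h0
        refine ⟨f, s', by linarith, ?_⟩
        intro x hx
        rcases eq_or_ne x 0 with rfl | hx0
        · simp
        · have hxK : ‖x‖⁻¹ • x ∈ K := ⟨hPsmul _ (by positivity) _ hx, by
            rw [mem_sphere_zero_iff_norm, norm_smul, norm_inv, norm_norm]
            exact inv_mul_cancel₀ (norm_ne_zero_iff.2 hx0)⟩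
          have h1 : f (‖x‖⁻¹ • x) < s' := hfa _ (subset_convexHull ℝ K hxK)
          rw [map_smul, smul_eq_mul] at h1
          have hxpos : (0:ℝ) < ‖x‖ := norm_pos_iff.2 hx0
          calc f x = ‖x‖ * (‖x‖⁻¹ * f x) := by field_simp
            _ ≤ ‖x‖ * s' := mul_le_mul_of_nonneg_left h1.le hxpos.le
            _ = s' * ‖x‖ := mul_comm _ _
      · refine ⟨0, -1, by norm_num, ?_⟩
        intro u hu
        have hu0 : u = 0 := by
          by_contra h0
          exact hK ⟨‖u‖⁻¹ • u, hPsmul _ (by positivity) _ hu, by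
            rw [mem_sphere_zero_iff_norm, norm_smul, norm_inv, norm_norm]
            exact inv_mul_cancel₀ (norm_ne_zero_iff.2 h0)⟩
        simp [hu0]
    refine ⟨f₀, ?_⟩
    have hball : Metric.ball f₀ (-s) ⊆ negDual P := by
      intro g hg u hu
      have h2 : ‖g - f₀‖ < -s := by rwa [Metric.mem_ball, dist_eq_norm] at hg
      have h3 : g u - f₀ u ≤ ‖g - f₀‖ * ‖u‖ := by
        have h4 := (g - f₀).le_opNorm u
        calc g u - f₀ u ≤ |g u - f₀ u| := le_abs_self _
          _ = ‖(g - f₀) u‖ := by rw [Real.norm_eq_abs]; rfl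
          _ ≤ ‖g - f₀‖ * ‖u‖ := h4
      have h5 := hf₀ u hu
      have h6 : ‖g - f₀‖ * ‖u‖ ≤ (-s) * ‖u‖ :=
        mul_le_mul_of_nonneg_right h2.le (norm_nonneg u)
      have : g u ≤ s * ‖u‖ + (-s) * ‖u‖ := by linarith
      linarith [this, (by ring : s * ‖u‖ + (-s) * ‖u‖ = (0:ℝ))]
    exact interior_maximal hball Metric.isOpen_ball (Metric.mem_ball_self (by linarith))
  -- continuity
  have hconvD : ConvexOn ℝ {f : X →L[ℝ] ℝ | BddAbove (range fun a : A => f a)}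
      (fun f => ⨆ a : A, f a) := by
    constructor
    · intro f hf g hg p q hp hq hpq
      refine ⟨p * (⨆ a : A, f a) + q * (⨆ a : A, g a), ?_⟩
      rintro _ ⟨i, rfl⟩
      have h1 : (p • f + q • g) (i : X) = p * f i + q * g i := by
        simp [smul_eq_mul]
      simp only [h1]
      exact add_le_add (mul_le_mul_of_nonneg_left (le_ciSup hf i) hp)
        (mul_le_mul_of_nonneg_left (le_ciSup hg i) hq)
    · intro f hf g hg p q hp hq hpq
      refine ciSup_le fun i => ?_
      have h1 : (p • f + q • g) (i : X) = p * f i + q * g i := by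
        simp [smul_eq_mul]
      simp only [h1, smul_eq_mul]
      exact add_le_add (mul_le_mul_of_nonneg_left (le_ciSup hf i) hp)
        (mul_le_mul_of_nonneg_left (le_ciSup hg i) hq)
  have hUsubD : interior (negDual P) ⊆
      interior {f : X →L[ℝ] ℝ | BddAbove (range fun a : A => f a)} :=
    interior_maximal (fun f hf => hUD f hf) isOpen_interior
  have hcontm : ContinuousOn (fun f : X →L[ℝ] ℝ => ⨆ a : A, f a) (interior (negDual P)) :=
    hconvD.continuousOn_interior.mono hUsubD
  have hcontσ : ContinuousOn (supportFn A) (interior (negDual P)) :=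
    (continuous_coe_real_ereal.comp_continuousOn hcontm).congr
      fun f hf => supportFn_eq_coe hA f (hUD f hf)
  refine ⟨hint_eq, hne_int, hcontσ, ?_⟩
  intro f hf
  set M : ℝ := ⨆ a : A, f a with hMdef
  have hfD : BddAbove (range fun a : A => f a) := hUD f hf
  have hσf : supportFn A f = (M : EReal) := supportFn_eq_coe hA f hfD
  have hMbd : ∀ a ∈ A, f a ≤ M := fun a ha => le_ciSup hfD ⟨a, ha⟩
  have hsub_eq : subdiff A f = C ∩ {u | f u = M} := by
    ext u
    constructor
    · rintro ⟨hne, hineq⟩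
      have huC : u ∈ C := by
        by_contra huC
        obtain ⟨h, s', hhs, hsh⟩ := geometric_hahn_banach_closed_point hCconv hCclosed huC
        have h2 : supportFn A (f + h) ≤ ((M + s' : ℝ) : EReal) := by
          refine iSup₂_le fun a ha => ?_
          have h3 : (f + h) a ≤ M + s' := add_le_add (hMbd a ha) (hhs a (hACsub ha)).le
          exact_mod_cast h3
        have h1 := hineq (f + h)
        rw [hσf, ← EReal.coe_add] at h1
        have h3 := le_trans h1 h2
        have h4 : M + ((f + h) u - f u) ≤ M + s' := by exact_mod_cast h3
        have h5 : (f + h) u - f u = h u := by simp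
        rw [h5] at h4
        linarith
      refine ⟨huC, le_antisymm (le_on_closure_convexHull hMbd huC) ?_⟩
      have h1 := hineq 0
      have h0app : (0 : X →L[ℝ] ℝ) u = 0 := rfl
      rw [hσf, supportFn_zero ⟨a₀, ha₀⟩, h0app, ← EReal.coe_add] at h1
      have h2 : M + ((0:ℝ) - f u) ≤ (0:ℝ) := by exact_mod_cast h1
      linarith
    · rintro ⟨huC, hfu⟩
      refine ⟨by rw [hσf]; exact EReal.coe_ne_top _, fun g => ?_⟩
      by_cases hg : supportFn A g = ⊤
      · rw [hg]; exact le_top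
      · have hbg := bddAbove_of_supportFn_ne_top g hg
        have h1 : g u ≤ ⨆ a : A, g a :=
          le_on_closure_convexHull (fun a ha => le_ciSup hbg ⟨a, ha⟩) huC
        rw [hσf, ← EReal.coe_add, supportFn_eq_coe hA g hbg]
        have h2 : M + (g u - f u) = g u := by rw [hfu]; ring
        rw [h2]
        exact_mod_cast h1
  have hclosedS : IsClosed (C ∩ {u | f u = M}) :=
    hCclosed.inter (isClosed_eq f.continuous continuous_const)
  have hrecS : ∀ c : ℝ, ∀ v ∈ recessionCone (C ∩ {x | c ≤ f x}), v = (0:X) := by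
    intro c v hv
    by_contra hv0
    have hvP : v ∈ P := by
      rw [hP]; exact recessionCone_mono inter_subset_left hv
    have h1 : 0 ≤ f v := recession_nonneg (fun x hx => hx.2) hv
    exact absurd h1 (not_le.2 (hneg f hf v hvP hv0))
  have hTbd : ∀ c : ℝ, Bornology.IsBounded (C ∩ {x | c ≤ f x}) := fun c =>
    isBounded_of_recessionCone (hrecS c)
  have hTco : IsCompact (C ∩ {x | f a₀ ≤ f x}) :=
    Metric.isCompact_of_isClosed_isBounded
      (hCclosed.inter (isClosed_le continuous_const f.continuous)) (hTbd _)
  obtain ⟨u₀, hu₀T, hu₀max⟩ := hTco.exists_isMaxOn ⟨a₀, ha₀C, show f a₀ ≤ f a₀ from le_refl _⟩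
    f.continuous.continuousOn
  have hmax : ∀ x ∈ C ∩ {x | f a₀ ≤ f x}, f x ≤ f u₀ := fun x hx => hu₀max hx
  have hu₀M : f u₀ = M := by
    refine le_antisymm (le_on_closure_convexHull hMbd hu₀T.1) (ciSup_le fun a => ?_)
    by_cases hc : f a₀ ≤ f (a : X)
    · exact hmax _ ⟨hACsub a.2, hc⟩
    · exact le_trans (not_le.1 hc).le (hmax a₀ ⟨ha₀C, show f a₀ ≤ f a₀ from le_refl _⟩)
  rw [hsub_eq]
  refine ⟨⟨u₀, hu₀T.1, hu₀M⟩, ?_, ?_⟩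
  · exact hCconv.inter (convex_hyperplane ⟨f.map_add, f.map_smul⟩ M)
  · apply Metric.isCompact_of_isClosed_isBounded hclosedS
    exact (hTbd M).subset fun x hx => ⟨hx.1, hx.2.ge⟩
end

section
/- Let X be a finite-dimensional real normed space with dual X*, and let A ⊂ X be a nonempty closed set such that the recession cone P := (cl conv A)_∞ of the closed convex hull of A is pointed. Then for every x* ∈ int P⁻ the set W_A(x*) := {a ∈ A : ⟨a, x*⟩ = σ_A(x*)} is nonempty and compact; in particular the supremum defining σ_A(x*) is attained on A. -/
open Set Filter Topology Pointwise

variable {X : Type*} [NormedAddCommGroup X] [NormedSpace ℝ X]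

/-- The set `W_A(x*) = {a ∈ A : ⟨a, x*⟩ = σ_A(x*)}`. -/
def Wset (A : Set X) (f : X →L[ℝ] ℝ) : Set X := {a ∈ A | (f a : EReal) = supportFn A f}

set_option maxHeartbeats 800000 in
set_option synthInstance.maxHeartbeats 200000 in
/-- For a nonempty closed set `A` in a nontrivial finite-dimensional real
normed space whose closed convex hull has a pointed recession cone `P`, for every
`x* ∈ int P⁻` the set `W_A(x*)` is nonempty and compact; in particular the supremum
defining `σ_A(x*)` is attained on `A`. -/
theorem stmt1 [FiniteDimensional ℝ X] [Nontrivial X]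
    (A : Set X) (hA : A.Nonempty) (hAclosed : IsClosed A)
    (P : Set X) (hP : P = recessionCone (closure (convexHull ℝ A)))
    (hpointed : P ∩ (-P) = {0}) :
    ∀ f ∈ interior (negDual P),
      (Wset A f).Nonempty ∧ IsCompact (Wset A f) ∧
      ∃ a ∈ A, supportFn A f = (f a : EReal) := by
  intro f hf
  obtain ⟨a₀, ha₀⟩ := hA
  -- Step A: f is strictly negative on P \ {0}
  have hneg : ∀ x ∈ P, x ≠ 0 → f x < 0 := by
    intro x hx hx0
    have hfle : f x ≤ 0 := (interior_subset hf) x hx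
    rcases lt_or_eq_of_le hfle with h | h
    · exact h
    exfalso
    rcases Metric.mem_nhds_iff.mp (mem_interior_iff_mem_nhds.mp hf) with ⟨ε, hε, hball⟩
    obtain ⟨g, hg1, hgx'⟩ := exists_dual_vector ℝ x (norm_ne_zero_iff.mpr hx0)
    have hgx : g x = ‖x‖ := by exact_mod_cast hgx'
    have hmem : f + (ε/2) • g ∈ Metric.ball f ε := by
      rw [Metric.mem_ball, dist_eq_norm, add_sub_cancel_left]
      have hns : ‖(ε/2) • g‖ ≤ ‖(ε/2 : ℝ)‖ * ‖g‖ := ContinuousLinearMap.opNorm_smul_le _ _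
      rw [hg1, Real.norm_eq_abs, abs_of_pos (by linarith : (0:ℝ) < ε/2)] at hns
      linarith
    have hle := hball hmem x hx
    have : (f + (ε/2) • g) x = f x + (ε/2) * g x := by
      simp [ContinuousLinearMap.add_apply]
    rw [this, h, hgx] at hle
    have hxpos : (0:ℝ) < ‖x‖ := norm_pos_iff.mpr hx0
    norm_cast at hle
    nlinarith
  -- Step B: S := {a ∈ A | f a₀ ≤ f a} is compact
  set S : Set X := A ∩ {a | f a₀ ≤ f a} with hS
  have hSclosed : IsClosed S :=
    hAclosed.inter (isClosed_le continuous_const f.continuous)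
  have hSbdd : Bornology.IsBounded S := by
    by_contra hbd
    rw [isBounded_iff_forall_norm_le] at hbd
    push_neg at hbd
    have hsel : ∀ n : ℕ, ∃ a ∈ S, (n : ℝ) + 1 < ‖a‖ := fun n => hbd ((n : ℝ) + 1)
    choose a haS hna using hsel
    set t : ℕ → ℝ := fun n => ‖a n‖⁻¹ with ht
    have hnpos : ∀ n, (0:ℝ) < ‖a n‖ := fun n => lt_of_le_of_lt (by positivity) (hna n)
    have htpos : ∀ n, 0 < t n := fun n => inv_pos.mpr (hnpos n)
    have hsphere : ∀ n, t n • a n ∈ Metric.sphere (0:X) 1 := by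
      intro n
      rw [mem_sphere_zero_iff_norm, norm_smul, Real.norm_eq_abs,
        abs_of_pos (htpos n), inv_mul_cancel₀ (hnpos n).ne']
    obtain ⟨u, hu_mem, φ, hφ, hconv⟩ :=
      (isCompact_sphere (0:X) 1).tendsto_subseq hsphere
    have hu0 : u ≠ 0 := by
      rw [mem_sphere_zero_iff_norm] at hu_mem
      intro h; rw [h, norm_zero] at hu_mem; norm_num at hu_mem
    have htφ0 : Tendsto (fun n => t (φ n)) atTop (𝓝 0) := by
      have h1 : Tendsto (fun n : ℕ => 1 / ((n : ℝ) + 1)) atTop (𝓝 0) :=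
        tendsto_one_div_add_atTop_nhds_zero_nat
      refine tendsto_of_tendsto_of_tendsto_of_le_of_le tendsto_const_nhds h1
        (fun n => (htpos (φ n)).le) (fun n => ?_)
      have h2 : (n : ℝ) + 1 < ‖a (φ n)‖ := by
        have h3 : ((n : ℝ)) ≤ ((φ n : ℕ) : ℝ) := Nat.cast_le.mpr (hφ.id_le n)
        linarith [hna (φ n)]
      rw [one_div]
      exact inv_anti₀ (by positivity) h2.le
    have huP : u ∈ P := by
      rw [hP]
      refine ⟨fun n => t (φ n), fun n => htpos (φ n), htφ0,
        fun n => a (φ n), fun n => ?_, hconv⟩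
      exact subset_closure (subset_convexHull ℝ A (haS (φ n)).1)
    have hfu : 0 ≤ f u := by
      have h1 : Tendsto (fun n => f (t (φ n) • a (φ n))) atTop (𝓝 (f u)) :=
        (f.continuous.tendsto u).comp hconv
      have h2 : Tendsto (fun n => t (φ n) * f a₀) atTop (𝓝 0) := by
        simpa using htφ0.mul_const (f a₀)
      refine le_of_tendsto_of_tendsto' h2 h1 (fun n => ?_)
      rw [map_smul, smul_eq_mul]
      exact mul_le_mul_of_nonneg_left (haS (φ n)).2 (htpos (φ n)).le
    exact absurd hfu (not_le.mpr (hneg u huP hu0))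
  have hScompact : IsCompact S := Metric.isCompact_of_isClosed_isBounded hSclosed hSbdd
  have ha₀S : a₀ ∈ S := ⟨ha₀, by simp only [mem_setOf_eq, le_refl]⟩
  have hSne : S.Nonempty := ⟨a₀, ha₀S⟩
  -- Step C: maximize f on S
  obtain ⟨b, hbS, hbmax⟩ := hScompact.exists_isMaxOn hSne f.continuous.continuousOn
  have hbA : b ∈ A := hbS.1
  have hmaxA : ∀ c ∈ A, f c ≤ f b := by
    intro c hc
    by_cases h : f a₀ ≤ f c
    · exact hbmax ⟨hc, h⟩
    · exact le_trans (le_of_not_ge h) (hbmax ha₀S)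
  have hσ : supportFn A f = (f b : EReal) := by
    refine le_antisymm (iSup₂_le fun c hc => EReal.coe_le_coe_iff.mpr (hmaxA c hc)) ?_
    exact le_iSup₂ (f := fun c (_ : c ∈ A) => ((f c : EReal))) b hbA
  have hWeq : Wset A f = {c ∈ A | f c = f b} := by
    ext c
    simp only [Wset, mem_setOf_eq, hσ, EReal.coe_eq_coe_iff]
  constructor
  · exact ⟨b, hbA, hσ ▸ rfl⟩
  refine ⟨?_, ⟨b, hbA, hσ⟩⟩
  have hWsub : Wset A f ⊆ S := by
    intro c hc
    rw [hWeq] at hc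
    refine ⟨hc.1, ?_⟩
    show f a₀ ≤ f c
    rw [hc.2]
    exact hbmax ha₀S
  have hWclosed : IsClosed (Wset A f) := by
    rw [hWeq]
    exact hAclosed.inter (isClosed_eq f.continuous continuous_const)
  exact hScompact.of_isClosed_subset hWclosed hWsub
end

section
/- Let X be a finite-dimensional real normed space with dual X*, and let A ⊂ X be a nonempty closed set such that the recession cone P := (cl conv A)_∞ of the closed convex hull of A is pointed. Then for every x* ∈ int P⁻ one has ∂σ_A(x*) = conv W_A(x*) ⊂ conv A, where W_A(x*) := {a ∈ A : ⟨a, x*⟩ = σ_A(x*)}. -/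
open Set Filter Topology Pointwise

variable {X : Type*} [NormedAddCommGroup X] [NormedSpace ℝ X]

lemma le_supportFn {A : Set X} {g : X →L[ℝ] ℝ} {a : X} (ha : a ∈ A) :
    ((g a : ℝ) : EReal) ≤ supportFn A g :=
  le_iSup₂ (f := fun a (_ : a ∈ A) => ((g a : ℝ) : EReal)) a ha

lemma supportFn_le {A : Set X} {g : X →L[ℝ] ℝ} {c : ℝ} (h : ∀ a ∈ A, g a ≤ c) :
    supportFn A g ≤ (c : EReal) :=
  iSup₂_le fun a ha => EReal.coe_le_coe_iff.mpr (h a ha)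

lemma supportFn_ne_bot {A : Set X} (hA : A.Nonempty) (g : X →L[ℝ] ℝ) :
    supportFn A g ≠ ⊥ := by
  obtain ⟨a, ha⟩ := hA
  intro h
  exact ((EReal.bot_lt_coe (g a)).trans_le (h ▸ le_supportFn ha)).false

lemma neg_of_mem_int {P : Set X} {f : X →L[ℝ] ℝ} (hf : f ∈ interior (negDual P))
    {u : X} (huP : u ∈ P) (hu0 : u ≠ 0) : f u < 0 := by
  obtain ⟨ε, hε, hball⟩ := Metric.mem_nhds_iff.mp (mem_interior_iff_mem_nhds.mp hf)
  obtain ⟨g, hg1, hgu⟩ := exists_dual_vector ℝ u (norm_ne_zero_iff.mpr hu0)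
  have hmem : f + (ε / 2) • g ∈ Metric.ball f ε := by
    rw [Metric.mem_ball, dist_eq_norm, add_sub_cancel_left, norm_smul (ε / 2) g, hg1, mul_one,
      Real.norm_eq_abs, abs_of_pos (by linarith : (0:ℝ) < ε / 2)]
    linarith
  have h2 := hball hmem u huP
  have h3 : f u + (ε / 2) * g u ≤ 0 := by simpa using h2
  have h4 : g u = ‖u‖ := by exact_mod_cast hgu
  have h5 : (0:ℝ) < ‖u‖ := norm_pos_iff.mpr hu0
  nlinarith

lemma asymp_bound [FiniteDimensional ℝ X] {A : Set X} {P : Set X}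
    (hP : P = recessionCone (closure (convexHull ℝ A)))
    {f : X →L[ℝ] ℝ} (hf : f ∈ interior (negDual P)) (C : ℝ) :
    ∃ r > (0:ℝ), ∃ R > (0:ℝ), ∀ a ∈ A, R ≤ ‖a‖ → f a ≤ C - r * ‖a‖ := by
  by_contra hcon
  push_neg at hcon
  have hseq : ∀ n : ℕ, ∃ a, a ∈ A ∧ ((n:ℝ) + 1 ≤ ‖a‖ ∧ C - (1 / ((n:ℝ) + 1)) * ‖a‖ < f a) := by
    intro n
    obtain ⟨a, ha, h1, h2⟩ := hcon (1 / ((n:ℝ)+1)) (by positivity) ((n:ℝ)+1) (by positivity)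
    exact ⟨a, ha, h1, by linarith⟩
  choose a hrest using hseq
  have haA : ∀ n, a n ∈ A := fun n => (hrest n).1
  have haN : ∀ n : ℕ, ((n:ℝ) + 1) ≤ ‖a n‖ := fun n => (hrest n).2.1
  have haf : ∀ n : ℕ, C - (1 / ((n:ℝ) + 1)) * ‖a n‖ < f (a n) := fun n => (hrest n).2.2
  have hnorm : ∀ n, (0:ℝ) < ‖a n‖ := fun n => lt_of_lt_of_le (by positivity) (haN n)
  set u : ℕ → X := fun n => ‖a n‖⁻¹ • a n with hu
  have huS : ∀ n, u n ∈ Metric.sphere (0:X) 1 := by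
    intro n
    simp only [hu, Metric.mem_sphere, dist_zero_right, norm_smul, norm_inv, norm_norm]
    rw [inv_mul_cancel₀ (hnorm n).ne']
  obtain ⟨z, hzS, φ, hφ, hconv⟩ := (isCompact_sphere (0:X) 1).tendsto_subseq huS
  have hz1 : ‖z‖ = 1 := by simpa using hzS
  have hz0 : z ≠ 0 := by intro h; rw [h, norm_zero] at hz1; norm_num at hz1
  have hge : ∀ n : ℕ, ((n:ℝ) + 1) ≤ ‖a (φ n)‖ := by
    intro n
    calc ((n:ℝ) + 1) ≤ (φ n : ℝ) + 1 := by
          have : (n:ℝ) ≤ (φ n : ℝ) := Nat.cast_le.mpr hφ.le_apply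
          linarith
      _ ≤ ‖a (φ n)‖ := haN (φ n)
  have ht0 : Tendsto (fun n => ‖a (φ n)‖⁻¹) atTop (𝓝 0) := by
    apply squeeze_zero (fun n => (inv_pos.2 (hnorm _)).le) (g := fun n : ℕ => 1 / ((n:ℝ) + 1))
    · intro n
      rw [one_div]
      exact inv_anti₀ (by positivity) (hge n)
    · exact tendsto_one_div_add_atTop_nhds_zero_nat
  have hzP : z ∈ P := by
    rw [hP]
    exact ⟨fun n => ‖a (φ n)‖⁻¹, fun n => inv_pos.2 (hnorm _), ht0, fun n => a (φ n),
      fun n => subset_closure (subset_convexHull ℝ A (haA _)), hconv⟩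
  have hneg : f z < 0 := neg_of_mem_int hf hzP hz0
  have h1 : Tendsto (fun n => f (u (φ n))) atTop (𝓝 (f z)) := (f.continuous.tendsto z).comp hconv
  set c : ℕ → ℝ := fun n => C * ‖a (φ n)‖⁻¹ - 1 / ((φ n : ℝ) + 1) with hc
  have hbound : ∀ n, c n ≤ f (u (φ n)) := by
    intro n
    have hN := hnorm (φ n)
    have hlt := haf (φ n)
    have hmul : ‖a (φ n)‖⁻¹ * (C - 1 / ((φ n:ℝ) + 1) * ‖a (φ n)‖) ≤ ‖a (φ n)‖⁻¹ * f (a (φ n)) :=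
      mul_le_mul_of_nonneg_left hlt.le (inv_nonneg.2 hN.le)
    have heq : f (u (φ n)) = ‖a (φ n)‖⁻¹ * f (a (φ n)) := by
      simp [hu, map_smul, smul_eq_mul]
    rw [heq, hc]
    have hNN : ‖a (φ n)‖⁻¹ * ‖a (φ n)‖ = 1 := inv_mul_cancel₀ hN.ne'
    calc C * ‖a (φ n)‖⁻¹ - 1 / ((φ n : ℝ) + 1)
        = ‖a (φ n)‖⁻¹ * (C - 1 / ((φ n:ℝ) + 1) * ‖a (φ n)‖) := by
          field_simp
      _ ≤ ‖a (φ n)‖⁻¹ * f (a (φ n)) := hmul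
  have hc0 : Tendsto c atTop (𝓝 0) := by
    have hT2 : Tendsto (fun n => 1 / ((φ n : ℝ) + 1)) atTop (𝓝 0) :=
      tendsto_one_div_add_atTop_nhds_zero_nat.comp hφ.tendsto_atTop
    have := (ht0.const_mul C).sub hT2
    rw [hc]
    simpa [one_div] using this
  have hfz : (0:ℝ) ≤ f z := le_of_tendsto_of_tendsto' hc0 h1 hbound
  linarith

private lemma sum_pad {M : Type*} [AddCommMonoid M] {k n : ℕ} (hkn : k ≤ n)
    (G : Fin n → M) (F : Fin k → M)
    (h1 : ∀ (i : Fin n) (h : (i : ℕ) < k), G i = F ⟨i, h⟩)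
    (h0 : ∀ i : Fin n, ¬((i : ℕ) < k) → G i = 0) :
    ∑ i, G i = ∑ j, F j := by
  have hsub : Finset.univ.map (Fin.castLEEmb hkn) ⊆ Finset.univ := Finset.subset_univ _
  rw [← Finset.sum_subset hsub]
  · rw [Finset.sum_map]
    apply Finset.sum_congr rfl
    intro j _
    have hj : ((Fin.castLEEmb hkn j : Fin n) : ℕ) < k := j.2
    rw [h1 _ hj]
    exact congrArg F (Fin.ext rfl)
  · intro i _ hi
    apply h0
    intro hlt
    apply hi
    rw [Finset.mem_map]
    exact ⟨⟨(i : ℕ), hlt⟩, Finset.mem_univ _, by ext; simp⟩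

lemma isCompact_convexHull_of_isCompact [FiniteDimensional ℝ X] {W : Set X}
    (hW : IsCompact W) : IsCompact (convexHull ℝ W) := by
  rcases W.eq_empty_or_nonempty with rfl | ⟨w₀, hw₀⟩
  · simpa [convexHull_empty] using isCompact_empty
  classical
  set n := Module.finrank ℝ X + 1 with hn
  have himg : convexHull ℝ W =
      (fun p : (Fin n → ℝ) × (Fin n → X) => ∑ i, p.1 i • p.2 i) ''
        (stdSimplex ℝ (Fin n) ×ˢ Set.univ.pi fun _ => W) := by
    apply Subset.antisymm
    · intro x hx
      rw [convexHull_eq_union] at hx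
      simp only [mem_iUnion] at hx
      obtain ⟨t, hts, hai, hx⟩ := hx
      have hcard : t.card ≤ n := by
        have h1 := hai.card_le_finrank_succ
        have h2 := Submodule.finrank_le (vectorSpan ℝ (Set.range ((↑) : t → X)))
        rw [Fintype.card_coe] at h1
        omega
      rw [Finset.convexHull_eq] at hx
      obtain ⟨w, hw0, hw1, hwx⟩ := hx
      rw [Finset.centerMass_eq_of_sum_1 _ _ hw1] at hwx
      set e := t.equivFin with he
      set lam : Fin n → ℝ := fun i =>
        if h : (i : ℕ) < t.card then w ((e.symm ⟨i, h⟩ : X)) else 0 with hlam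
      set v : Fin n → X := fun i =>
        if h : (i : ℕ) < t.card then ((e.symm ⟨i, h⟩ : X)) else w₀ with hv
      have hl1 : ∀ (i : Fin n) (h : (i:ℕ) < t.card), lam i = w ((e.symm ⟨i,h⟩ : X)) :=
        fun i h => dif_pos h
      have hl0 : ∀ (i : Fin n), ¬((i:ℕ) < t.card) → lam i = 0 := fun i h => dif_neg h
      have hv1 : ∀ (i : Fin n) (h : (i:ℕ) < t.card), v i = ((e.symm ⟨i,h⟩ : X)) :=
        fun i h => dif_pos h
      have hv0 : ∀ (i : Fin n), ¬((i:ℕ) < t.card) → v i = w₀ := fun i h => dif_neg h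
      have hsum1 : ∑ i, lam i = 1 := by
        rw [sum_pad hcard lam (fun j => w ((e.symm j : X))) hl1 hl0,
          Equiv.sum_comp e.symm (fun y => w (y : X)), Finset.sum_coe_sort t w]
        exact hw1
      refine ⟨(lam, v), ⟨⟨fun i => ?_, hsum1⟩, ?_⟩, ?_⟩
      · show 0 ≤ lam i
        by_cases h : (i:ℕ) < t.card
        · rw [hl1 i h]; exact hw0 _ (Finset.coe_mem _)
        · rw [hl0 i h]
      · intro i _
        show v i ∈ W
        by_cases h : (i:ℕ) < t.card
        · rw [hv1 i h]; exact hts (Finset.coe_mem _)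
        · rw [hv0 i h]; exact hw₀
      · show ∑ i, lam i • v i = x
        rw [sum_pad hcard (fun i => lam i • v i) (fun j => w ((e.symm j : X)) • ((e.symm j : X)))
          (fun i h => by rw [hl1 i h, hv1 i h])
          (fun i h => by rw [hl0 i h, zero_smul]),
          Equiv.sum_comp e.symm (fun y => w (y : X) • (y : X)), ← hwx,
          ← Finset.sum_coe_sort t (fun y => w y • id y)]
        rfl
    · rintro y ⟨⟨lam, v⟩, ⟨hlam, hv⟩, rfl⟩
      exact (convex_convexHull ℝ W).sum_mem (fun i _ => hlam.1 i) hlam.2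
        (fun i _ => subset_convexHull ℝ W (hv i (mem_univ i)))
  rw [himg]
  exact ((isCompact_stdSimplex ℝ _).prod (isCompact_univ_pi fun _ => hW)).image
    (continuous_finset_sum _ fun i _ =>
      ((continuous_apply i).comp continuous_fst).smul ((continuous_apply i).comp continuous_snd))


set_option maxHeartbeats 1000000 in
/-- For a nonempty closed set `A` in a nontrivial finite-dimensional real
normed space whose closed convex hull has a pointed recession cone `P`, for every
`x* ∈ int P⁻` one has `∂σ_A(x*) = conv W_A(x*) ⊆ conv A`. -/
theorem stmt3 [FiniteDimensional ℝ X] [Nontrivial X]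
    (A : Set X) (hA : A.Nonempty) (hAclosed : IsClosed A)
    (P : Set X) (hP : P = recessionCone (closure (convexHull ℝ A)))
    (hpointed : P ∩ (-P) = {0}) :
    ∀ f ∈ interior (negDual P),
      subdiff A f = convexHull ℝ (Wset A f) ∧
      convexHull ℝ (Wset A f) ⊆ convexHull ℝ A := by
  intro f hf
  refine ⟨?_, convexHull_mono fun a ha => ha.1⟩
  rcases eq_or_ne (supportFn A f) ⊤ with htop | htop
  · have hW : Wset A f = ∅ := by
      ext a
      simp only [Wset, mem_setOf_eq, htop, mem_empty_iff_false, iff_false, not_and]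
      exact fun _ => EReal.coe_ne_top _
    have hsub : subdiff A f = ∅ := by
      ext u
      simp only [subdiff, mem_setOf_eq, htop, ne_eq, not_true_eq_false, false_and,
        mem_empty_iff_false]
    rw [hW, hsub, convexHull_empty]
  have hbot : supportFn A f ≠ ⊥ := supportFn_ne_bot hA f
  set σ := (supportFn A f).toReal with hσ
  have hcoe : ((σ : ℝ) : EReal) = supportFn A f := EReal.coe_toReal htop hbot
  obtain ⟨r, hr, R, hR, hasymp⟩ := asymp_bound hP hf (σ - 1)
  -- a point with value > σ - 1/2
  have hlt : ((σ - 2⁻¹ : ℝ) : EReal) < supportFn A f := by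
    rw [← hcoe, EReal.coe_lt_coe_iff]
    norm_num
  obtain ⟨a₀, ha₀A, ha₀⟩ : ∃ a ∈ A, σ - 2⁻¹ < f a := by
    rw [supportFn] at hlt
    obtain ⟨a, ha⟩ := lt_iSup_iff.mp hlt
    obtain ⟨haA, hfa⟩ := lt_iSup_iff.mp ha
    exact ⟨a, haA, EReal.coe_lt_coe_iff.mp hfa⟩
  set R' := max R (max ‖a₀‖ 1) with hR'
  have hR'1 : (1:ℝ) ≤ R' := le_max_of_le_right (le_max_right _ _)
  have hR'R : R ≤ R' := le_max_left _ _
  have hR'a₀ : ‖a₀‖ ≤ R' := le_max_of_le_right (le_max_left _ _)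
  set K := A ∩ Metric.closedBall (0:X) R' with hK
  have hKcomp : IsCompact K :=
    (isCompact_closedBall (0:X) R').inter_left hAclosed
  have ha₀K : a₀ ∈ K := ⟨ha₀A, by rwa [Metric.mem_closedBall, dist_zero_right]⟩
  have hKne : K.Nonempty := ⟨a₀, ha₀K⟩
  obtain ⟨m, hmK, hmmax⟩ := hKcomp.exists_isMaxOn hKne f.continuous.continuousOn
  have hmax : ∀ a ∈ K, f a ≤ f m := fun a ha => hmmax ha
  have hfar : ∀ a ∈ A, R' < ‖a‖ → f a ≤ σ - 1 := by
    intro a ha hnorm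
    have h1 := hasymp a ha (hR'R.trans hnorm.le)
    nlinarith [hr.le, (lt_of_lt_of_le (lt_of_lt_of_le zero_lt_one hR'1) hnorm.le)]
  have hfa_le : ∀ a ∈ A, f a ≤ f m := by
    intro a ha
    by_cases hn : ‖a‖ ≤ R'
    · exact hmax a ⟨ha, by rwa [Metric.mem_closedBall, dist_zero_right]⟩
    · have h1 := hfar a ha (not_le.mp hn)
      have h2 : σ - 2⁻¹ < f m := lt_of_lt_of_le ha₀ (hmax a₀ ha₀K)
      linarith
  have hsm : supportFn A f = ((f m : ℝ) : EReal) :=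
    le_antisymm (supportFn_le hfa_le) (le_supportFn hmK.1)
  have hσm : σ = f m := by rw [hσ, hsm, EReal.toReal_coe]
  have hmW : m ∈ Wset A f := ⟨hmK.1, by rw [hsm]⟩
  have hWK : Wset A f ⊆ K := by
    intro a ha
    have hfa : f a = σ := by
      have := ha.2
      rw [← hcoe, EReal.coe_eq_coe_iff] at this
      exact this
    refine ⟨ha.1, ?_⟩
    rw [Metric.mem_closedBall, dist_zero_right]
    by_contra hn
    have := hfar a ha.1 (not_le.mp hn)
    linarith
  have hWclosed : IsClosed (Wset A f) := by
    have : Wset A f = A ∩ f ⁻¹' {σ} := by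
      ext a
      simp only [Wset, mem_setOf_eq, mem_inter_iff, mem_preimage, mem_singleton_iff]
      constructor
      · rintro ⟨h1, h2⟩
        rw [← hcoe, EReal.coe_eq_coe_iff] at h2
        exact ⟨h1, h2⟩
      · rintro ⟨h1, h2⟩
        exact ⟨h1, by rw [← hcoe, EReal.coe_eq_coe_iff]; exact h2⟩
    rw [this]
    exact hAclosed.inter (isClosed_singleton.preimage f.continuous)
  have hWcomp : IsCompact (Wset A f) := hKcomp.of_isClosed_subset hWclosed hWK
  have hCW : IsCompact (convexHull ℝ (Wset A f)) := isCompact_convexHull_of_isCompact hWcomp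
  apply Subset.antisymm
  · -- subdiff ⊆ conv W
    intro u hu
    by_contra hu'
    obtain ⟨h, c, hc1, hc2⟩ :=
      geometric_hahn_banach_closed_point (convex_convexHull ℝ _) hCW.isClosed hu'
    have hhK : ∀ a ∈ K, |h a| ≤ ‖h‖ * R' := by
      intro a ha
      calc |h a| = ‖h a‖ := (Real.norm_eq_abs _).symm
        _ ≤ ‖h‖ * ‖a‖ := h.le_opNorm a
        _ ≤ ‖h‖ * R' := by
            apply mul_le_mul_of_nonneg_left _ (norm_nonneg h)
            have h2 := ha.2
            rwa [Metric.mem_closedBall, dist_zero_right] at h2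
    set B := ‖h‖ * R' + 1 with hB
    have hBpos : 0 < B := by positivity
    obtain ⟨δ, hδ, hδS⟩ : ∃ δ > (0:ℝ), ∀ a ∈ K, c ≤ h a → f a ≤ σ - δ := by
      by_cases hS : (K ∩ h ⁻¹' Ici c).Nonempty
      · have hScomp : IsCompact (K ∩ h ⁻¹' Ici c) :=
          hKcomp.inter_right (isClosed_Ici.preimage h.continuous)
        obtain ⟨b, hbmem, hbmax⟩ := hScomp.exists_isMaxOn hS f.continuous.continuousOn
        have hbK : b ∈ K := hbmem.1
        have hbc : c ≤ h b := hbmem.2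
        have hbA : b ∈ A := hbK.1
        have hble : f b ≤ σ := by rw [hσm]; exact hfa_le b hbA
        have hbne : f b ≠ σ := by
          intro heq
          have hbW : b ∈ Wset A f := ⟨hbA, by rw [← hcoe, heq]⟩
          have hlt2 := hc1 b (subset_convexHull ℝ _ hbW)
          linarith
        refine ⟨σ - f b, sub_pos.mpr (lt_of_le_of_ne hble hbne), fun a ha hca => ?_⟩
        have hmem : a ∈ K ∩ h ⁻¹' Ici c := ⟨ha, hca⟩
        have hfab : f a ≤ f b := hbmax hmem
        linarith
      · refine ⟨1, one_pos, fun a ha hca => ?_⟩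
        exact absurd (⟨a, ha, hca⟩ : (K ∩ h ⁻¹' Ici c).Nonempty) hS
    set t := min (min (r / (‖h‖ + 1)) (1 / (2 * B))) (δ / (2 * (B + |h u| + 1))) with htdef
    have htpos : 0 < t := by
      apply lt_min (lt_min _ _) _ <;> positivity
    have ht1 : t * ‖h‖ ≤ r := by
      have h1 : t ≤ r / (‖h‖ + 1) := (min_le_left _ _).trans (min_le_left _ _)
      have h2 : t * (‖h‖ + 1) ≤ r := by
        rw [← le_div_iff₀ (by positivity)]
        exact h1
      nlinarith [htpos]
    have ht2 : t * B ≤ 1 / 2 := by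
      have h1 : t ≤ 1 / (2 * B) := (min_le_left _ _).trans (min_le_right _ _)
      have h2 : t * (2 * B) ≤ 1 := by
        rw [← le_div_iff₀ (by positivity)]
        exact h1
      nlinarith
    have ht3 : t * (B + |h u|) < δ := by
      have h1 : t ≤ δ / (2 * (B + |h u| + 1)) := min_le_right _ _
      have h2 : t * (2 * (B + |h u| + 1)) ≤ δ := by
        rw [← le_div_iff₀ (by positivity)]
        exact h1
      nlinarith [abs_nonneg (h u), htpos]
    clear_value t B σ R'
    set g := f + t • h with hg
    have hgval : ∀ x : X, g x = f x + t * h x := by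
      intro x
      simp [hg, ContinuousLinearMap.add_apply, ContinuousLinearMap.coe_smul',
        Pi.smul_apply, smul_eq_mul]
    obtain ⟨aT, haTK, haTmax⟩ := hKcomp.exists_isMaxOn hKne g.continuous.continuousOn
    have hgm : σ - 1/2 ≤ g m := by
      have := hhK m hmK
      have h1 : |t * h m| ≤ t * B := by
        rw [abs_mul, abs_of_pos htpos]
        apply mul_le_mul_of_nonneg_left _ htpos.le
        nlinarith [abs_nonneg (h m)]
      rw [hgval m, ← hσm]
      have h6 := (abs_le.mp h1).1
      linarith only [ht2, h6]
    have hmgT : g m ≤ g aT := haTmax hmK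
    have hsup : supportFn A g ≤ ((g aT : ℝ) : EReal) := by
      apply supportFn_le
      intro a ha
      by_cases hn : ‖a‖ ≤ R'
      · exact haTmax ⟨ha, by rwa [Metric.mem_closedBall, dist_zero_right]⟩
      · have h1 := hfar a ha (not_le.mp hn)
        have h2 : t * h a ≤ t * (‖h‖ * ‖a‖) := by
          apply mul_le_mul_of_nonneg_left _ htpos.le
          calc h a ≤ |h a| := le_abs_self _
            _ = ‖h a‖ := (Real.norm_eq_abs _).symm
            _ ≤ ‖h‖ * ‖a‖ := h.le_opNorm a
        have h3 : f a ≤ σ - 1 - r * ‖a‖ := hasymp a ha (hR'R.trans (not_le.mp hn).le)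
        have h4 : t * (‖h‖ * ‖a‖) ≤ r * ‖a‖ := by
          rw [← mul_assoc]
          exact mul_le_mul_of_nonneg_right ht1 (norm_nonneg a)
        rw [hgval a]
        have h5 : g aT ≥ σ - 1/2 := le_trans hgm hmgT
        rw [hgval aT] at h5 ⊢
        linarith
    have hineq := hu.2 g
    have hkey : σ + t * h u ≤ f aT + t * h aT := by
      have h1 : supportFn A f + ((g u - f u : ℝ) : EReal) ≤ ((g aT : ℝ) : EReal) :=
        le_trans hineq hsup
      rw [← hcoe, ← EReal.coe_add, EReal.coe_le_coe_iff] at h1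
      have h2 : g u - f u = t * h u := by rw [hgval u]; ring
      rw [h2] at h1
      rw [← hgval aT]
      exact h1
    have hfaT : f aT ≤ σ := by rw [hσm]; exact hfa_le aT haTK.1
    have huaT : h u ≤ h aT := by nlinarith [htpos]
    have hcaT : c ≤ h aT := (hc2.trans_le huaT).le
    have hfaT2 : f aT ≤ σ - δ := hδS aT haTK hcaT
    have haTB : h aT ≤ B := by
      have := hhK aT haTK
      nlinarith [le_abs_self (h aT)]
    have hhu : -(t * |h u|) ≤ t * h u := by
      rw [← mul_neg]
      exact mul_le_mul_of_nonneg_left (neg_abs_le _) htpos.le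
    nlinarith [htpos]
  · -- conv W ⊆ subdiff
    apply convexHull_min
    · intro a ha
      refine ⟨htop, fun g => ?_⟩
      rw [← ha.2]
      have heq : ((f a : ℝ) : EReal) + ((g a - f a : ℝ) : EReal) = ((g a : ℝ) : EReal) := by
        rw [← EReal.coe_add]
        norm_num
      rw [heq]
      exact le_supportFn ha.1
    · intro u hu v hv s t hs ht hst
      refine ⟨htop, fun g => ?_⟩
      rcases eq_or_ne (supportFn A g) ⊤ with hgt | hgt
      · rw [hgt]; exact le_top
      have hgb : supportFn A g ≠ ⊥ := supportFn_ne_bot hA g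
      set β := (supportFn A g).toReal with hβ
      have hcoeg : ((β : ℝ) : EReal) = supportFn A g := EReal.coe_toReal hgt hgb
      have h1 := hu.2 g
      have h2 := hv.2 g
      rw [← hcoe, ← hcoeg, ← EReal.coe_add, EReal.coe_le_coe_iff] at h1 h2 ⊢
      have e1 : g (s • u + t • v) = s * g u + t * g v := by
        rw [map_add, map_smul, map_smul]; simp [smul_eq_mul]
      have e2 : f (s • u + t • v) = s * f u + t * f v := by
        rw [map_add, map_smul, map_smul]; simp [smul_eq_mul]
      rw [e1, e2]
      have e3 : s * β + t * β = β := by rw [← add_mul, hst, one_mul]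
      have e4 : s * σ + t * σ = σ := by rw [← add_mul, hst, one_mul]
      have s1 := mul_le_mul_of_nonneg_left h1 hs
      have s2 := mul_le_mul_of_nonneg_left h2 ht
      nlinarith [s1, s2, e3, e4]
end

section
/- Let X be a finite-dimensional real normed space with dual X*, and let A ⊂ X be a nonempty closed set such that the recession cone P := (cl conv A)_∞ of the closed convex hull of A is pointed. Let x* ∈ int P⁻. Then σ_A is (Fréchet) differentiable at x* if and only if W_A(x*) := {a ∈ A : ⟨a, x*⟩ = σ_A(x*)} is a singleton; in that case the gradient ∇σ_A(x*) belongs to A and W_A(x*) = {∇σ_A(x*)}. -/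
open Set Filter Topology Pointwise

variable {X : Type*} [NormedAddCommGroup X] [NormedSpace ℝ X]

/-- `σ_A` is (Fréchet) differentiable at `f`: there is a real-valued function agreeing
with `σ_A` on a neighbourhood of `f` which is differentiable at `f`. -/
def SigmaDiffAt (A : Set X) (f : X →L[ℝ] ℝ) : Prop :=
  ∃ g : (X →L[ℝ] ℝ) → ℝ, (∀ᶠ y in 𝓝 f, ((g y : ℝ) : EReal) = supportFn A y) ∧
    DifferentiableAt ℝ g f

lemma support_eq (A : Set X) (y : X →L[ℝ] ℝ) (u : X) (hu : u ∈ A)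
    (hmax : ∀ a ∈ A, y a ≤ y u) : supportFn A y = (y u : EReal) := by
  apply le_antisymm
  · exact iSup₂_le fun a ha => EReal.coe_le_coe_iff.mpr (hmax a ha)
  · exact le_iSup₂ (f := fun a (_ : a ∈ A) => ((y a : EReal))) u hu

lemma lemB (P : Set X) (f : X →L[ℝ] ℝ) (hf : f ∈ interior (negDual P)) :
    ∃ c : ℝ, 0 < c ∧ ∀ x ∈ P, f x ≤ -c * ‖x‖ := by
  rw [mem_interior_iff_mem_nhds, Metric.mem_nhds_iff] at hf
  obtain ⟨ε, hε, hball⟩ := hf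
  refine ⟨ε/2, by linarith, fun x hx => ?_⟩
  rcases eq_or_ne x 0 with rfl | hx0
  · simp
  obtain ⟨g, hg1, hgx⟩ := exists_dual_vector ℝ x (norm_ne_zero_iff.mpr hx0)
  have hmem : f + (ε/2) • g ∈ Metric.ball f ε := by
    rw [Metric.mem_ball, dist_eq_norm, add_sub_cancel_left, norm_smul (ε/2) g, hg1,
      Real.norm_eq_abs, abs_of_pos (by linarith : (0:ℝ) < ε/2)]
    linarith
  have hgx' : g x = ‖x‖ := by exact_mod_cast hgx
  have h0 := hball hmem x hx
  simp only [ContinuousLinearMap.add_apply, ContinuousLinearMap.smul_apply, smul_eq_mul,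
    hgx'] at h0
  linarith

lemma lemA [FiniteDimensional ℝ X] (C : Set X) (f : X →L[ℝ] ℝ) (c : ℝ) (hc : 0 < c)
    (hPf : ∀ x ∈ recessionCone C, f x ≤ -c * ‖x‖) :
    ∃ R₀ : ℝ, 0 < R₀ ∧ ∀ a ∈ C, R₀ ≤ ‖a‖ → f a ≤ -(c/2) * ‖a‖ := by
  by_contra hcon
  push_neg at hcon
  have hcon' : ∀ n : ℕ, ∃ a ∈ C, ((n:ℝ)+1) ≤ ‖a‖ ∧ -(c/2) * ‖a‖ < f a := by
    intro n
    obtain ⟨a, haC, haN, haf⟩ := hcon ((n:ℝ)+1) (by positivity)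
    exact ⟨a, haC, haN, haf⟩
  choose a haC haN haf using hcon'
  have hapos : ∀ n, 0 < ‖a n‖ := fun n => lt_of_lt_of_le (by positivity) (haN n)
  set u : ℕ → X := fun n => ‖a n‖⁻¹ • a n with hu
  have husph : ∀ n, u n ∈ Metric.sphere (0:X) 1 := by
    intro n
    rw [mem_sphere_zero_iff_norm, hu]
    rw [norm_smul (‖a n‖⁻¹) (a n), Real.norm_eq_abs, abs_of_pos (inv_pos.mpr (hapos n)),
      inv_mul_cancel₀ (hapos n).ne']
  obtain ⟨v, hv, φ, hφ, hvt⟩ := (isCompact_sphere (0:X) 1).tendsto_subseq husph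
  have hvnorm : ‖v‖ = 1 := mem_sphere_zero_iff_norm.mp hv
  have hvrec : v ∈ recessionCone C := by
    refine ⟨fun n => ‖a (φ n)‖⁻¹, fun n => inv_pos.mpr (hapos _), ?_,
      fun n => a (φ n), fun n => haC _, hvt⟩
    have hts : Tendsto (fun n : ℕ => ((n:ℝ)+1)⁻¹) atTop (𝓝 0) := by
      simpa [one_div] using tendsto_one_div_add_atTop_nhds_zero_nat (𝕜 := ℝ)
    refine squeeze_zero (fun n => (inv_pos.mpr (hapos _)).le) (fun n => ?_) hts
    apply inv_anti₀ (by positivity)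
    calc ((n:ℝ)+1) ≤ ((φ n : ℝ)+1) := by
          have h := (Nat.cast_le (α := ℝ)).mpr (hφ.le_apply : n ≤ φ n)
          linarith
      _ ≤ ‖a (φ n)‖ := haN _
  have hfv : f v ≤ -c := by
    have := hPf v hvrec
    rwa [hvnorm, mul_one] at this
  have hfv2 : -(c/2) ≤ f v := by
    have hlim : Tendsto (fun n => f (u (φ n))) atTop (𝓝 (f v)) :=
      (f.continuous.tendsto v).comp hvt
    apply ge_of_tendsto hlim
    filter_upwards with n
    have h1 : -(c/2) * ‖a (φ n)‖ < f (a (φ n)) := haf _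
    have : f (u (φ n)) = ‖a (φ n)‖⁻¹ * f (a (φ n)) := by
      rw [hu]; simp [smul_eq_mul]
    rw [this]
    have h2 : ‖a (φ n)‖⁻¹ * (-(c/2) * ‖a (φ n)‖) ≤ ‖a (φ n)‖⁻¹ * f (a (φ n)) :=
      mul_le_mul_of_nonneg_left h1.le (inv_pos.mpr (hapos _)).le
    have h3 : ‖a (φ n)‖⁻¹ * (-(c/2) * ‖a (φ n)‖) = -(c/2) := by
      rw [mul_comm, mul_assoc, mul_inv_cancel₀ (hapos _).ne', mul_one]
    linarith
  linarith

lemma master [FiniteDimensional ℝ X] (A : Set X) (a₀ : X) (ha₀ : a₀ ∈ A)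
    (P : Set X) (hP : P = recessionCone (closure (convexHull ℝ A)))
    (f : X →L[ℝ] ℝ) (hf : f ∈ interior (negDual P)) :
    ∃ R δ : ℝ, 0 < R ∧ 0 < δ ∧ ‖a₀‖ ≤ R ∧
      ∀ y : X →L[ℝ] ℝ, ‖y - f‖ ≤ δ → ∀ a ∈ A, R < ‖a‖ → y a < y a₀ := by
  obtain ⟨c, hc, hcP⟩ := lemB P f hf
  obtain ⟨R₀, hR₀, hA0⟩ := lemA (closure (convexHull ℝ A)) f c hc (by rw [← hP]; exact hcP)
  set δ := c/4 with hδdef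
  set m := f a₀ - δ * ‖a₀‖ with hm
  refine ⟨max R₀ (max ‖a₀‖ ((4/c) * (|m|+1))), δ, lt_max_of_lt_left hR₀, by positivity,
    le_max_of_le_right (le_max_left _ _), ?_⟩
  intro y hy a ha hRa
  have hbnd : ∀ b : X, |y b - f b| ≤ δ * ‖b‖ := by
    intro b
    have h1 : ‖(y - f) b‖ ≤ ‖y - f‖ * ‖b‖ := (y - f).le_opNorm b
    rw [ContinuousLinearMap.sub_apply, Real.norm_eq_abs] at h1
    exact h1.trans (mul_le_mul_of_nonneg_right hy (norm_nonneg b))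
  have haC : a ∈ closure (convexHull ℝ A) := subset_closure (subset_convexHull ℝ A ha)
  have h1 : f a ≤ -(c/2) * ‖a‖ :=
    hA0 a haC ((le_max_left _ _).trans hRa.le)
  have h2 : y a ≤ -(c/4) * ‖a‖ := by
    have := abs_le.mp (hbnd a)
    have hδc : δ = c/4 := hδdef
    nlinarith [norm_nonneg a]
  have h3 : m ≤ y a₀ := by
    have := abs_le.mp (hbnd a₀)
    rw [hm]; linarith
  have h4 : (4/c) * (|m|+1) < ‖a‖ := lt_of_le_of_lt (le_max_of_le_right (le_max_right _ _)) hRa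
  have h5 : -(c/4) * ‖a‖ < m := by
    have habs : -|m| ≤ m := neg_abs_le m
    have e : (c/4) * ((4/c) * (|m|+1)) = |m|+1 := by field_simp
    have h6 : |m| + 1 < (c/4) * ‖a‖ := by
      rw [← e]
      exact mul_lt_mul_of_pos_left h4 (by linarith)
    linarith
  linarith

/-- For a nonempty closed set `A` in a nontrivial finite-dimensional real
normed space whose closed convex hull has a pointed recession cone `P`, and `x* ∈ int P⁻`:
`σ_A` is differentiable at `x*` iff `W_A(x*)` is a singleton; in that case the gradient
`∇σ_A(x*)` belongs to `A` and `W_A(x*) = {∇σ_A(x*)}` (the gradient being identified with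
the point `u ∈ X` via evaluation). -/
theorem stmt4 [FiniteDimensional ℝ X] [Nontrivial X]
    (A : Set X) (hA : A.Nonempty) (hAclosed : IsClosed A)
    (P : Set X) (hP : P = recessionCone (closure (convexHull ℝ A)))
    (hpointed : P ∩ (-P) = {0})
    (f : X →L[ℝ] ℝ) (hf : f ∈ interior (negDual P)) :
    (SigmaDiffAt A f ↔ ∃ a : X, Wset A f = {a}) ∧
    ∀ g : (X →L[ℝ] ℝ) → ℝ, (∀ᶠ y in 𝓝 f, ((g y : ℝ) : EReal) = supportFn A y) →
      DifferentiableAt ℝ g f →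
      ∃ u ∈ A, Wset A f = {u} ∧ ∀ h : X →L[ℝ] ℝ, fderiv ℝ g f h = h u := by
  obtain ⟨a₀, ha₀⟩ := hA
  obtain ⟨R, δ, hR, hδ, ha₀R, hmaster⟩ := master A a₀ ha₀ P hP f hf
  set K := A ∩ Metric.closedBall (0:X) R with hKdef
  have ha₀K : a₀ ∈ K := ⟨ha₀, Metric.mem_closedBall.mpr (by simpa using ha₀R)⟩
  have hKne : K.Nonempty := ⟨a₀, ha₀K⟩
  have hKcp : IsCompact K := (isCompact_closedBall (0:X) R).inter_left hAclosed
  have hff : ‖f - f‖ ≤ δ := by simp [hδ.le]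
  -- existence of A-maximizers near f, lying in K
  have hargmax : ∀ y : X →L[ℝ] ℝ, ‖y - f‖ ≤ δ → ∃ b ∈ K, ∀ a ∈ A, y a ≤ y b := by
    intro y hy
    obtain ⟨b, hbK, hbmax⟩ := hKcp.exists_isMaxOn hKne (y.continuous.continuousOn)
    refine ⟨b, hbK, fun a ha => ?_⟩
    by_cases hna : ‖a‖ ≤ R
    · exact hbmax ⟨ha, Metric.mem_closedBall.mpr (by simpa using hna)⟩
    · exact le_trans (hmaster y hy a ha (not_le.mp hna)).le (hbmax ha₀K)
  -- membership in Wset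
  have hWmem : ∀ u : X, u ∈ Wset A f ↔ (u ∈ A ∧ ∀ a ∈ A, f a ≤ f u) := by
    intro u
    constructor
    · rintro ⟨huA, hus⟩
      refine ⟨huA, fun a ha => ?_⟩
      have h1 : (f a : EReal) ≤ supportFn A f :=
        le_iSup₂ (f := fun a (_ : a ∈ A) => ((f a : EReal))) a ha
      rw [← hus] at h1
      exact_mod_cast h1
    · rintro ⟨huA, hmax⟩
      exact ⟨huA, (support_eq A f u huA hmax).symm⟩
  have hWbd : ∀ u ∈ Wset A f, u ∈ K := by
    intro u huW
    obtain ⟨huA, humax⟩ := (hWmem u).mp huW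
    refine ⟨huA, Metric.mem_closedBall.mpr ?_⟩
    simp only [dist_zero_right]
    by_contra hu
    exact absurd (humax a₀ ha₀) (not_le.mpr (hmaster f hff u huA (not_le.mp hu)))
  have hWf : ∃ u₀, u₀ ∈ Wset A f := by
    obtain ⟨b, hbK, hbmax⟩ := hargmax f hff
    exact ⟨b, (hWmem b).mpr ⟨hbK.1, hbmax⟩⟩
  -- derivative identification
  have hkey : ∀ g : (X →L[ℝ] ℝ) → ℝ, (∀ᶠ y in 𝓝 f, ((g y : ℝ) : EReal) = supportFn A y) →
      DifferentiableAt ℝ g f → ∀ u ∈ Wset A f, ∀ h : X →L[ℝ] ℝ, fderiv ℝ g f h = h u := by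
    intro g hgev hgd u huW h
    obtain ⟨huA, humax⟩ := (hWmem u).mp huW
    have hge : ∀ᶠ y in 𝓝 f, y u ≤ g y := by
      filter_upwards [hgev] with y hy
      have h1 : (y u : EReal) ≤ supportFn A y :=
        le_iSup₂ (f := fun a (_ : a ∈ A) => ((y a : EReal))) u huA
      rw [← hy] at h1
      exact_mod_cast h1
    have hgf : g f = f u := by
      have h1 := hgev.self_of_nhds
      rw [support_eq A f u huA humax] at h1
      exact_mod_cast h1
    set γ : ℝ → (X →L[ℝ] ℝ) := fun t => f + t • h with hγ
    have hγc : Continuous γ := by fun_prop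
    have hγ0 : γ 0 = f := by simp [hγ]
    have hγu : ∀ t : ℝ, γ t u = f u + t * h u := by
      intro t; simp [hγ, smul_eq_mul]
    have hmin : IsLocalMin (fun t => g (γ t) - t * h u) 0 := by
      have hev0 : ∀ᶠ t in 𝓝 (0:ℝ), γ t u ≤ g (γ t) := by
        have := hγc.tendsto 0
        rw [hγ0] at this
        exact this.eventually hge
      filter_upwards [hev0] with t ht
      have h2 := hγu t
      show g (γ 0) - 0 * h u ≤ g (γ t) - t * h u
      rw [hγ0, hgf]
      have : f u + t * h u ≤ g (γ t) := h2 ▸ ht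
      linarith
    have hd : HasDerivAt (fun t => g (γ t) - t * h u) (fderiv ℝ g f h - h u) 0 := by
      have h1 : HasDerivAt γ h 0 := by
        have : HasDerivAt (fun t : ℝ => t • h) ((1:ℝ) • h) 0 :=
          (hasDerivAt_id (0:ℝ)).smul_const h
        simpa [hγ] using this.const_add f
      have h2 : HasDerivAt (fun t => g (γ t)) (fderiv ℝ g f h) 0 := by
        have hF : HasFDerivAt g (fderiv ℝ g f) (γ 0) := hγ0 ▸ hgd.hasFDerivAt
        exact hF.comp_hasDerivAt 0 h1
      exact h2.sub (hasDerivAt_mul_const (h u))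
    have h0 := hmin.deriv_eq_zero
    rw [hd.deriv] at h0
    linarith
  -- forward direction
  have hsingle : SigmaDiffAt A f → ∃ a : X, Wset A f = {a} := by
    rintro ⟨g, hgev, hgd⟩
    obtain ⟨u₀, hu₀⟩ := hWf
    refine ⟨u₀, Set.eq_singleton_iff_unique_mem.mpr ⟨hu₀, fun v hv => ?_⟩⟩
    by_contra hne
    obtain ⟨h, hh1, hh2⟩ := exists_dual_vector ℝ (v - u₀) (norm_ne_zero_iff.mpr (sub_ne_zero.mpr hne))
    have hh2' : h (v - u₀) = ‖v - u₀‖ := by exact_mod_cast hh2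
    have e1 := hkey g hgev hgd v hv h
    have e2 := hkey g hgev hgd u₀ hu₀ h
    have : ‖v - u₀‖ = 0 := by
      rw [← hh2', map_sub, ← e1, ← e2, sub_self]
    exact (sub_ne_zero.mpr hne) (norm_eq_zero.mp this)
  -- backward direction
  have hdiff : (∃ a : X, Wset A f = {a}) → SigmaDiffAt A f := by
    rintro ⟨u, hWu⟩
    have huW : u ∈ Wset A f := by rw [hWu]; exact rfl
    obtain ⟨huA, humax⟩ := (hWmem u).mp huW
    have huK : u ∈ K := hWbd u huW
    set g : (X →L[ℝ] ℝ) → ℝ := fun y => sSup ((fun a => y a) '' K) with hgdef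
    have hgval : ∀ y : X →L[ℝ] ℝ, ∀ b ∈ A, (∀ a ∈ A, y a ≤ y b) → b ∈ K → g y = y b := by
      intro y b hbA hbmax hbK
      refine IsGreatest.csSup_eq ⟨⟨b, hbK, rfl⟩, ?_⟩
      rintro z ⟨a, haK, rfl⟩
      exact hbmax a haK.1
    have hgev : ∀ᶠ y in 𝓝 f, ((g y : ℝ) : EReal) = supportFn A y := by
      have hball : Metric.closedBall f δ ∈ 𝓝 f := Metric.closedBall_mem_nhds f hδ
      filter_upwards [hball] with y hy
      rw [Metric.mem_closedBall, dist_eq_norm] at hy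
      obtain ⟨b, hbK, hbmax⟩ := hargmax y hy
      rw [hgval y b hbK.1 hbmax hbK, support_eq A y b hbK.1 hbmax]
    -- localization of maximizers
    have hloc : ∀ ε : ℝ, 0 < ε → ∃ δ' : ℝ, 0 < δ' ∧ δ' ≤ δ ∧
        ∀ y : X →L[ℝ] ℝ, ‖y - f‖ ≤ δ' → ∀ b ∈ A, (∀ a ∈ A, y a ≤ y b) → ‖b - u‖ ≤ ε := by
      intro ε hε
      by_contra hcon
      push_neg at hcon
      have hseq : ∀ n : ℕ, ∃ y : X →L[ℝ] ℝ, ‖y - f‖ ≤ ((n:ℝ)+1)⁻¹ ∧ ‖y - f‖ ≤ δ ∧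
          ∃ b, b ∈ A ∧ (∀ a ∈ A, y a ≤ y b) ∧ ε < ‖b - u‖ := by
        intro n
        obtain ⟨y, hy, b, hbA, hbmax, hbu⟩ :=
          hcon (min δ ((n:ℝ)+1)⁻¹) (lt_min hδ (by positivity)) (min_le_left _ _)
        exact ⟨y, hy.trans (min_le_right _ _), hy.trans (min_le_left _ _), b, hbA, hbmax, hbu⟩
      choose y hy1 hy2 b hbA hbmax hbu using hseq
      have hbK : ∀ n, b n ∈ K := by
        intro n
        refine ⟨hbA n, Metric.mem_closedBall.mpr ?_⟩
        simp only [dist_zero_right]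
        by_contra hnb
        exact absurd (hbmax n a₀ ha₀)
          (not_le.mpr (hmaster (y n) (hy2 n) (b n) (hbA n) (not_le.mp hnb)))
      obtain ⟨v, hvK, φ, hφ, hbv⟩ := hKcp.tendsto_subseq hbK
      have hyf : Tendsto (fun n => y (φ n)) atTop (𝓝 f) := by
        rw [tendsto_iff_norm_sub_tendsto_zero]
        have hts : Tendsto (fun n : ℕ => ((n:ℝ)+1)⁻¹) atTop (𝓝 0) := by
          simpa [one_div] using tendsto_one_div_add_atTop_nhds_zero_nat (𝕜 := ℝ)
        refine squeeze_zero (fun n => norm_nonneg _) (fun n => ?_) hts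
        refine (hy1 (φ n)).trans (inv_anti₀ (by positivity) ?_)
        have h := (Nat.cast_le (α := ℝ)).mpr (hφ.le_apply : n ≤ φ n)
        linarith
      have heval : Tendsto (fun n => y (φ n) (b (φ n))) atTop (𝓝 (f v)) := by
        have hp : Tendsto (fun n => ((y (φ n) : X →L[ℝ] ℝ), b (φ n))) atTop (𝓝 (f, v)) :=
          hyf.prodMk_nhds hbv
        exact (isBoundedBilinearMap_apply.continuous.tendsto (f, v)).comp hp
      have hvmax : ∀ a ∈ A, f a ≤ f v := by
        intro a ha
        have h1 : Tendsto (fun n => y (φ n) a) atTop (𝓝 (f a)) := by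
          have hp : Tendsto (fun n => ((y (φ n) : X →L[ℝ] ℝ), a)) atTop (𝓝 (f, a)) :=
            hyf.prodMk_nhds tendsto_const_nhds
          exact (isBoundedBilinearMap_apply.continuous.tendsto (f, a)).comp hp
        exact le_of_tendsto_of_tendsto' h1 heval (fun n => hbmax (φ n) a ha)
      have hvb : v = u := by
        have hvW : v ∈ Wset A f := (hWmem v).mpr ⟨hvK.1, hvmax⟩
        rw [hWu] at hvW
        exact hvW
      have hlim : Tendsto (fun n => ‖b (φ n) - u‖) atTop (𝓝 ‖v - u‖) :=
        ((continuous_norm.comp (continuous_id.sub continuous_const)).tendsto v).comp hbv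
      have hfin : ε ≤ ‖v - u‖ :=
        ge_of_tendsto hlim (Eventually.of_forall (fun n => (hbu (φ n)).le))
      rw [hvb, sub_self, norm_zero] at hfin
      linarith
    -- derivative
    have hD : HasFDerivAt g (ContinuousLinearMap.apply ℝ ℝ u) f := by
      rw [hasFDerivAt_iff_isLittleO, Asymptotics.isLittleO_iff]
      intro ε hε
      obtain ⟨δ', hδ'0, hδ'δ, hδ'⟩ := hloc ε hε
      have hball : Metric.closedBall f δ' ∈ 𝓝 f := Metric.closedBall_mem_nhds f hδ'0
      filter_upwards [hball] with y hy
      rw [Metric.mem_closedBall, dist_eq_norm] at hy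
      have hyδ : ‖y - f‖ ≤ δ := hy.trans hδ'δ
      obtain ⟨b, hbK, hbmax⟩ := hargmax y hyδ
      have hgy : g y = y b := hgval y b hbK.1 hbmax hbK
      have hgff : g f = f u := hgval f u huA humax huK
      have hbu : ‖b - u‖ ≤ ε := hδ' y hy b hbK.1 hbmax
      have happ : (ContinuousLinearMap.apply ℝ ℝ u) (y - f) = y u - f u := by
        simp [ContinuousLinearMap.sub_apply]
      rw [hgy, hgff, happ]
      have hlow : 0 ≤ y b - y u := sub_nonneg.mpr (hbmax u huA)
      have hfb : f b ≤ f u := humax b hbK.1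
      have hup : y b - y u ≤ ε * ‖y - f‖ := by
        have h1 : (y - f) (b - u) ≤ ‖y - f‖ * ‖b - u‖ := by
          have := (y - f).le_opNorm (b - u)
          rw [Real.norm_eq_abs] at this
          exact (le_abs_self _).trans this
        have h2 : (y - f) (b - u) = (y b - y u) - (f b - f u) := by
          simp [ContinuousLinearMap.sub_apply, map_sub]; ring
        have h3 : ‖y - f‖ * ‖b - u‖ ≤ ‖y - f‖ * ε := by
          exact mul_le_mul_of_nonneg_left hbu (norm_nonneg _)
        rw [h2] at h1
        have : y b - y u ≤ ‖y - f‖ * ε + (f b - f u) := by linarith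
        linarith [mul_comm ε ‖y - f‖]
      have heq : y b - f u - (y u - f u) = y b - y u := by ring
      rw [heq, Real.norm_eq_abs, abs_of_nonneg hlow]
      exact hup
    exact ⟨g, hgev, hD.differentiableAt⟩
  refine ⟨⟨hsingle, hdiff⟩, ?_⟩
  intro g hgev hgd
  obtain ⟨u, hWu⟩ := hsingle ⟨g, hgev, hgd⟩
  have huW : u ∈ Wset A f := by rw [hWu]; exact rfl
  exact ⟨u, huW.1, hWu, fun h => hkey g hgev hgd u huW h⟩
end

section
/- Let X be a finite-dimensional real normed space with dual X*, and let A ⊂ X be a nonempty closed set such that the recession cone of cl conv A is pointed. If σ_A is (Fréchet) differentiable at every point of dom ∂σ_A \ (lin₀A)^⊥, then the relative boundary of cl conv A is contained in A, i.e. rbd(cl conv A) ⊂ A. -/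
open Set Filter Topology Pointwise

variable {X : Type*} [NormedAddCommGroup X] [NormedSpace ℝ X]

lemma support_ge {A : Set X} (hA : A.Nonempty) (g : X →L[ℝ] ℝ) {u : X}
    (hu : u ∈ closure (convexHull ℝ A)) : (g u : EReal) ≤ supportFn A g := by
  by_cases h : supportFn A g = ⊤
  · simp [h]
  · obtain ⟨a0, ha0⟩ := hA
    have hbot : supportFn A g ≠ ⊥ := by
      have h1 : ((g a0 : ℝ) : EReal) ≤ supportFn A g :=
        le_iSup₂ (f := fun a (_ : a ∈ A) => ((g a : ℝ) : EReal)) a0 ha0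
      exact fun hb => by simp [hb] at h1
    set m := (supportFn A g).toReal with hm
    have hme : supportFn A g = (m : EReal) := (EReal.coe_toReal h hbot).symm
    have hle : ∀ a ∈ A, g a ≤ m := by
      intro a ha
      have h1 : ((g a : ℝ) : EReal) ≤ supportFn A g :=
        le_iSup₂ (f := fun a (_ : a ∈ A) => ((g a : ℝ) : EReal)) a ha
      rw [hme] at h1
      exact_mod_cast h1
    have hconv : Convex ℝ {y : X | g y ≤ m} :=
      convex_halfSpace_le (IsLinearMap.mk g.map_add g.map_smul) m
    have hclosed : IsClosed {y : X | g y ≤ m} := isClosed_le g.continuous continuous_const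
    have hsub : closure (convexHull ℝ A) ⊆ {y : X | g y ≤ m} :=
      closure_minimal (convexHull_min hle hconv) hclosed
    rw [hme]
    exact_mod_cast hsub hu

lemma support_eq_s5 {A : Set X} (hA : A.Nonempty) (f : X →L[ℝ] ℝ) {x : X}
    (hx : x ∈ closure (convexHull ℝ A)) (hsup : ∀ c ∈ closure (convexHull ℝ A), f c ≤ f x) :
    supportFn A f = ((f x : ℝ) : EReal) := by
  refine le_antisymm (iSup₂_le fun a ha => ?_) (support_ge hA f hx)
  exact_mod_cast hsup a (subset_closure (subset_convexHull ℝ A ha))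
lemma grad_eq {A : Set X} (hA : A.Nonempty) {f : X →L[ℝ] ℝ} {g : (X →L[ℝ] ℝ) → ℝ}
    (hev : ∀ᶠ y in 𝓝 f, ((g y : ℝ) : EReal) = supportFn A y)
    (hgd : DifferentiableAt ℝ g f) {u : X} (hu : u ∈ closure (convexHull ℝ A))
    (hfu : supportFn A f = ((f u : ℝ) : EReal)) :
    fderiv ℝ g f = ContinuousLinearMap.apply ℝ ℝ u := by
  have hgf : g f = f u := by
    have h1 : ((g f : ℝ) : EReal) = supportFn A f := hev.self_of_nhds
    rw [hfu] at h1
    exact_mod_cast h1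
  have hmin : IsLocalMin (fun y : X →L[ℝ] ℝ => g y - y u) f := by
    filter_upwards [hev] with y hy
    have h2 : ((y u : ℝ) : EReal) ≤ supportFn A y := support_ge hA y hu
    rw [← hy] at h2
    have h3 : y u ≤ g y := by exact_mod_cast h2
    simp only [hgf]
    linarith
  have hd : HasFDerivAt (fun y : X →L[ℝ] ℝ => g y - y u)
      (fderiv ℝ g f - ContinuousLinearMap.apply ℝ ℝ u) f :=
    hgd.hasFDerivAt.sub (ContinuousLinearMap.apply ℝ ℝ u).hasFDerivAt
  have h0 := hmin.hasFDerivAt_eq_zero hd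
  have := sub_eq_zero.mp h0
  exact this

lemma face_unique {A : Set X} [FiniteDimensional ℝ X] (hA : A.Nonempty) {f : X →L[ℝ] ℝ}
    {g : (X →L[ℝ] ℝ) → ℝ}
    (hev : ∀ᶠ y in 𝓝 f, ((g y : ℝ) : EReal) = supportFn A y)
    (hgd : DifferentiableAt ℝ g f) {u v : X} (hu : u ∈ closure (convexHull ℝ A))
    (hv : v ∈ closure (convexHull ℝ A))
    (hfu : supportFn A f = ((f u : ℝ) : EReal))
    (hfv : supportFn A f = ((f v : ℝ) : EReal)) : u = v := by
  have h1 := grad_eq hA hev hgd hu hfu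
  have h2 := grad_eq hA hev hgd hv hfv
  by_contra hne
  obtain ⟨φ, hφ⟩ := SeparatingDual.exists_separating_of_ne (R := ℝ) hne
  have : ContinuousLinearMap.apply ℝ ℝ u φ = ContinuousLinearMap.apply ℝ ℝ v φ := by
    rw [← h1, ← h2]
  simp only [ContinuousLinearMap.apply_apply] at this
  exact hφ this


lemma exists_support [FiniteDimensional ℝ X] {A : Set X} (hA : A.Nonempty) {x : X}
    (hx : x ∈ intrinsicFrontier ℝ (closure (convexHull ℝ A))) :
    ∃ f : X →L[ℝ] ℝ, (∀ c ∈ closure (convexHull ℝ A), f c ≤ f x) ∧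
      ∃ v ∈ (affineSpan ℝ A).direction, f v ≠ 0 := by
  set C := closure (convexHull ℝ A) with hCdef
  have hC : Convex ℝ C := (convex_convexHull ℝ A).closure
  have hCc : IsClosed C := isClosed_closure
  have hxC : x ∈ C := intrinsicFrontier_subset hCc hx
  -- affine spans agree
  have hCsub : C ⊆ (affineSpan ℝ A : Set X) := by
    refine closure_minimal ?_ (affineSpan ℝ A).closed_of_finiteDimensional
    rw [← affineSpan_convexHull]
    exact subset_affineSpan ℝ _
  have span_eq : affineSpan ℝ C = affineSpan ℝ A := by
    refine le_antisymm (affineSpan_le.mpr hCsub) (affineSpan_mono ℝ ?_)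
    exact (subset_convexHull ℝ A).trans subset_closure
  set V := (affineSpan ℝ A).direction with hVdef
  have hxs : x ∈ affineSpan ℝ A := hCsub hxC
  -- the translated set inside V
  set E : Set V := {v : V | (v : X) + x ∈ C} with hEdef
  have hmemV : ∀ c ∈ C, c - x ∈ V := by
    intro c hc
    have := AffineSubspace.vsub_mem_direction (hCsub hc) hxs
    simpa using this
  have hEconv : Convex ℝ E := by
    intro v hv w hw a b ha hb hab
    have : ((a • v + b • w : V) : X) + x = a • ((v : X) + x) + b • ((w : X) + x) := by
      push_cast
      have hx' : a • x + b • x = x := by rw [← add_smul, hab, one_smul]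
      rw [smul_add, smul_add]
      rw [show a • (v:X) + a • x + (b • (w:X) + b • x)
          = a • (v:X) + b • (w:X) + (a • x + b • x) by abel, hx']
    simpa only [hEdef, mem_setOf_eq, this] using hC hv hw ha hb hab
  have h0E : (0 : V) ∈ E := by simp [hEdef, hxC]
  -- 0 is not in the interior of E
  have h0notint : (0 : V) ∉ interior E := by
    intro h0
    rw [mem_interior_iff_mem_nhds, Metric.mem_nhds_iff] at h0
    obtain ⟨ε, hε, hball⟩ := h0
    -- then x is in the intrinsic interior of C
    have hxsC : x ∈ affineSpan ℝ C := by rw [span_eq]; exact hxs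
    set y : affineSpan ℝ C := ⟨x, hxsC⟩ with hy
    have hyint : y ∈ interior ((↑) ⁻¹' C : Set (affineSpan ℝ C)) := by
      rw [mem_interior_iff_mem_nhds]
      refine Filter.mem_of_superset (Metric.ball_mem_nhds y hε) ?_
      intro z hz
      have hzmem : (z : X) - x ∈ V := by
        rw [hVdef, ← span_eq]
        simpa using AffineSubspace.vsub_mem_direction z.2 hxsC
      rw [Metric.mem_ball, Subtype.dist_eq, dist_eq_norm] at hz
      have hnorm : ‖(⟨(z : X) - x, hzmem⟩ : V)‖ < ε := by
        rw [← Submodule.norm_coe]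
        exact hz
      have := hball (mem_ball_zero_iff.mpr hnorm)
      simpa [hEdef, sub_add_cancel] using this
    have hxint : x ∈ intrinsicInterior ℝ C := ⟨y, hyint, rfl⟩
    obtain ⟨y', hy', hy'x⟩ := hx
    have : y' = y := Subtype.coe_injective hy'x
    rw [this] at hy'
    rw [← closure_diff_interior] at hy'
    exact hy'.2 hyint
  -- E affinely spans V
  have spanE : affineSpan ℝ E = ⊤ := by
    rw [AffineSubspace.affineSpan_eq_top_iff_vectorSpan_eq_top_of_nonempty ℝ V V ⟨0, h0E⟩]
    have hvs : vectorSpan ℝ E = Submodule.span ℝ E := by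
      rw [vectorSpan_eq_span_vsub_set_right ℝ h0E]
      congr 1
      ext w
      simp
    rw [hvs]
    rw [Submodule.eq_top_iff']
    intro v
    have hvV : (v : X) ∈ (affineSpan ℝ A).direction := v.2
    have hVC : (affineSpan ℝ A).direction = vectorSpan ℝ C := by
      rw [← span_eq, direction_affineSpan]
    rw [hVC, vectorSpan_eq_span_vsub_set_right ℝ hxC] at hvV
    have hsub : (fun c => c -ᵥ x) '' C ⊆
        (Submodule.map V.subtype (Submodule.span ℝ E) : Set X) := by
      rintro _ ⟨c, hc, rfl⟩
      refine ⟨⟨c - x, hmemV c hc⟩, ?_, rfl⟩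
      exact Submodule.subset_span (by simp [hEdef, sub_add_cancel, hc])
    have := (Submodule.span_le.mpr hsub) hvV
    obtain ⟨w, hw, hwv⟩ := this
    have : w = v := Subtype.coe_injective hwv
    rwa [← this]
  -- nonempty interior, separation
  have hint : (interior E).Nonempty :=
    (hEconv.interior_nonempty_iff_affineSpan_eq_top).mpr spanE
  obtain ⟨e, he⟩ := hint
  obtain ⟨φ, hφ⟩ := geometric_hahn_banach_open_point (hEconv.interior) isOpen_interior h0notint
  have hφ0 : ∀ a ∈ interior E, φ a < 0 := by simpa using hφ
  have hφE : ∀ a ∈ E, φ a ≤ 0 := by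
    intro a ha
    have htend : Tendsto (fun t : ℝ => φ (t • e + (1 - t) • a)) (𝓝[>] 0) (𝓝 (φ a)) := by
      have hcont : Continuous (fun t : ℝ => φ (t • e + (1 - t) • a)) := by
        exact φ.continuous.comp ((continuous_id.smul continuous_const).add
          ((continuous_const.sub continuous_id).smul continuous_const))
      have := hcont.tendsto 0
      simp only [zero_smul, sub_zero, one_smul, zero_add] at this
      exact this.mono_left nhdsWithin_le_nhds
    refine le_of_tendsto htend ?_
    filter_upwards [Ioo_mem_nhdsGT_of_mem (Set.left_mem_Ico.mpr one_pos)] with t ht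
    exact (hφ0 _ (hEconv.combo_interior_closure_mem_interior he (subset_closure ha)
      ht.1 (by linarith [ht.2]) (by ring))).le
  -- extend φ to X
  obtain ⟨W, hW⟩ := Submodule.exists_isCompl V
  set π : X →L[ℝ] V :=
    LinearMap.toContinuousLinearMap (V.linearProjOfIsCompl W hW) with hπ
  refine ⟨φ.comp π, ?_, ⟨(e : X), e.2, ?_⟩⟩
  · intro c hc
    have h1 : π c - π x = π (c - x) := by simp
    have h2 : π (c - x) = ⟨c - x, hmemV c hc⟩ := by
      rw [hπ]
      simp only [LinearMap.coe_toContinuousLinearMap']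
      exact Submodule.linearProjOfIsCompl_apply_left hW ⟨c - x, hmemV c hc⟩
    have h3 : φ (π c) - φ (π x) = φ ⟨c - x, hmemV c hc⟩ := by
      rw [← map_sub, h1, h2]
    have h4 : φ (⟨c - x, hmemV c hc⟩ : V) ≤ 0 :=
      hφE _ (by simp [hEdef, sub_add_cancel, hc])
    simp only [ContinuousLinearMap.comp_apply]
    linarith
  · have : π (e : X) = e := by
      rw [hπ]
      simp only [LinearMap.coe_toContinuousLinearMap']
      exact Submodule.linearProjOfIsCompl_apply_left hW _
    simp only [ContinuousLinearMap.comp_apply, this]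
    exact (hφ0 e he).ne

/-- Let `A` be a nonempty closed set in a nontrivial finite-dimensional
real normed space whose closed convex hull has a pointed recession cone. If `σ_A` is
differentiable at every point of `dom ∂σ_A \ (lin₀ A)^⊥` then the relative boundary of
`cl conv A` is contained in `A`. Here `lin₀ A` is the direction of the affine span of `A`
and `(lin₀ A)^⊥ = {x* : x* = 0 on lin₀ A}`. -/
theorem stmt5 [FiniteDimensional ℝ X] [Nontrivial X]
    (A : Set X) (hA : A.Nonempty) (hAclosed : IsClosed A)
    (hpointed : recessionCone (closure (convexHull ℝ A)) ∩
      (-(recessionCone (closure (convexHull ℝ A)))) = {0})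
    (hdiff : ∀ f : X →L[ℝ] ℝ, (subdiff A f).Nonempty →
      ¬ (∀ x ∈ (affineSpan ℝ A).direction, f x = 0) → SigmaDiffAt A f) :
    intrinsicFrontier ℝ (closure (convexHull ℝ A)) ⊆ A := by
  intro x hx
  have hAC : A ⊆ closure (convexHull ℝ A) := (subset_convexHull ℝ A).trans subset_closure
  have hC : Convex ℝ (closure (convexHull ℝ A)) := (convex_convexHull ℝ A).closure
  have hCc : IsClosed (closure (convexHull ℝ A)) := isClosed_closure
  have hxC : x ∈ closure (convexHull ℝ A) := intrinsicFrontier_subset hCc hx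
  obtain ⟨f, hfsup, v, hvV, hfv⟩ := exists_support hA hx
  have hsupx : supportFn A f = ((f x : ℝ) : EReal) := support_eq_s5 hA f hxC hfsup
  have hsubne : (subdiff A f).Nonempty := by
    refine ⟨x, ?_, fun g => ?_⟩
    · rw [hsupx]; exact EReal.coe_ne_top _
    · have h1 : supportFn A f + ((g x - f x : ℝ) : EReal) = ((g x : ℝ) : EReal) := by
        rw [hsupx, ← EReal.coe_add]
        norm_num
      rw [h1]
      exact support_ge hA g hxC
  have hnz : ¬ ∀ w ∈ (affineSpan ℝ A).direction, f w = 0 := fun h => hfv (h v hvV)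
  obtain ⟨g, hev, hgd⟩ := hdiff f hsubne hnz
  have uniq : ∀ u ∈ closure (convexHull ℝ A), f u = f x → u = x := by
    intro u hu hfu
    exact face_unique hA hev hgd hu hxC (by rw [hsupx, hfu]) hsupx
  -- maximizing sequence in A
  have hseq : ∀ n : ℕ, ∃ a ∈ A, f x - 1 / (n + 1) < f a := by
    intro n
    by_contra h
    push_neg at h
    have h2 : supportFn A f ≤ ((f x - 1 / (n + 1) : ℝ) : EReal) :=
      iSup₂_le fun a ha => by exact_mod_cast h a ha
    rw [hsupx] at h2
    have h3 : f x ≤ f x - 1 / (n + 1) := by exact_mod_cast h2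
    have hpos : (0 : ℝ) < 1 / (n + 1) := by positivity
    linarith
  choose a haA hagt using hseq
  have hale : ∀ n, f (a n) ≤ f x := fun n => hfsup _ (hAC (haA n))
  have hdiv : Tendsto (fun n : ℕ => 1 / (n + 1 : ℝ)) atTop (𝓝 0) :=
    tendsto_one_div_add_atTop_nhds_zero_nat
  have htend : Tendsto (fun n => f (a n)) atTop (𝓝 (f x)) := by
    have h0 : Tendsto (fun n : ℕ => f x - 1 / (n + 1)) atTop (𝓝 (f x)) := by
      simpa using tendsto_const_nhds.sub hdiv
    exact tendsto_of_tendsto_of_tendsto_of_le_of_le h0 tendsto_const_nhds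
      (fun n => (hagt n).le) hale
  by_cases hb : ∃ r, ∀ n, ‖a n‖ ≤ r
  · obtain ⟨r, hr⟩ := hb
    obtain ⟨l, _, ψ, hψ, hconv⟩ := (isCompact_closedBall (0 : X) r).tendsto_subseq
      (fun n => mem_closedBall_zero_iff.mpr (hr n))
    have hlA : l ∈ A := hAclosed.mem_of_tendsto hconv (Eventually.of_forall fun n => haA _)
    have hfl : f l = f x := tendsto_nhds_unique ((f.continuous.tendsto l).comp hconv)
      (htend.comp hψ.tendsto_atTop)
    have := uniq l (hAC hlA) hfl
    exact this ▸ hlA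
  · exfalso
    push_neg at hb
    choose nk hnk using fun k : ℕ => hb (k + 1)
    set c : ℕ → X := fun k => a (nk k) with hc
    have hcnorm : ∀ k : ℕ, (k + 1 : ℝ) < ‖c k‖ := fun k => hnk k
    have hcpos : ∀ k, (0 : ℝ) < ‖c k‖ := fun k => lt_trans (by positivity) (hcnorm k)
    set u : ℕ → X := fun k => (‖c k‖)⁻¹ • c k with hu
    have husph : ∀ k, u k ∈ Metric.sphere (0 : X) 1 := by
      intro k
      rw [mem_sphere_zero_iff_norm, hu]
      rw [norm_smul, norm_inv, norm_norm]
      exact inv_mul_cancel₀ (hcpos k).ne'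
    obtain ⟨w, hw, ψ, hψ, hwconv⟩ := (isCompact_sphere (0 : X) 1).tendsto_subseq husph
    have hwnorm : ‖w‖ = 1 := mem_sphere_zero_iff_norm.mp hw
    set t : ℕ → ℝ := fun k => (‖c (ψ k)‖)⁻¹ with ht
    have ht0 : ∀ k, 0 < t k := fun k => inv_pos.mpr (hcpos _)
    have htle : ∀ k : ℕ, t k ≤ 1 / (k + 1) := by
      intro k
      rw [ht]
      rw [one_div]
      apply inv_anti₀ (by positivity)
      calc (k + 1 : ℝ) ≤ ψ k + 1 := by
            have h5 : k ≤ ψ k := hψ.le_apply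
            exact add_le_add_left (Nat.cast_le.mpr h5) 1
        _ ≤ ‖c (ψ k)‖ := (hcnorm (ψ k)).le
    have httend : Tendsto t atTop (𝓝 0) :=
      squeeze_zero (fun k => (ht0 k).le) htle hdiv
    have hfc_bdd : ∀ k, ‖f (c k)‖ ≤ |f x| + 1 := by
      intro k
      rw [Real.norm_eq_abs, abs_le]
      have h1 : f x - 1 / (nk k + 1) < f (c k) := hagt (nk k)
      have h2 : f (c k) ≤ f x := hale (nk k)
      have h3 : (0 : ℝ) < 1 / (nk k + 1) := by positivity
      have h4 : (1 : ℝ) / (nk k + 1) ≤ 1 := by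
        rw [div_le_one (by positivity)]
        have : (0:ℝ) ≤ (nk k : ℝ) := Nat.cast_nonneg _
        linarith
      constructor
      · have := neg_abs_le (f x)
        linarith
      · have := le_abs_self (f x)
        linarith
    have hfw : f w = 0 := by
      have hA1 : Tendsto (fun k => f (u (ψ k))) atTop (𝓝 (f w)) :=
        (f.continuous.tendsto w).comp hwconv
      have hA2 : Tendsto (fun k => f (u (ψ k))) atTop (𝓝 0) := by
        have hle : ∀ k : ℕ, ‖f (u (ψ k))‖ ≤ (1 / (k + 1)) * (|f x| + 1) := by
          intro k
          have he : f (u (ψ k)) = t k * f (c (ψ k)) := by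
            rw [hu, ht]
            simp [map_smul, smul_eq_mul]
          rw [he, norm_mul]
          have hn1 : ‖t k‖ ≤ 1 / (k + 1) := by
            rw [Real.norm_eq_abs, abs_of_pos (ht0 k)]
            exact htle k
          exact mul_le_mul hn1 (hfc_bdd (ψ k)) (norm_nonneg _) (by positivity)
        exact squeeze_zero_norm hle (by simpa using hdiv.mul_const (|f x| + 1))
      exact tendsto_nhds_unique hA1 hA2
    have hxwC : x + w ∈ closure (convexHull ℝ A) := by
      apply hCc.mem_of_tendsto
        (f := fun k => (1 - t k) • x + t k • c (ψ k)) (b := atTop)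
      · have h1 : Tendsto (fun k => (1 - t k) • x) atTop (𝓝 x) := by
          have h1a : Tendsto (fun k => (1 : ℝ) - t k) atTop (𝓝 1) := by
            simpa using httend.const_sub (1 : ℝ)
          have h1b := h1a.smul (tendsto_const_nhds (x := x))
          simpa using h1b
        have h2 : Tendsto (fun k => t k • c (ψ k)) atTop (𝓝 w) := by
          have he : (fun k => t k • c (ψ k)) = u ∘ ψ := by
            funext k
            rw [hu, ht]
            rfl
          rw [he]
          exact hwconv
        simpa using h1.add h2
      · apply Eventually.of_forall
        intro k
        have htk1 : t k ≤ 1 := (htle k).trans (by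
          rw [div_le_one (by positivity)]
          have : (0:ℝ) ≤ (k : ℝ) := Nat.cast_nonneg _
          linarith)
        exact hC hxC (hAC (haA _)) (by linarith) (ht0 k).le (by ring)
    have hfxw : f (x + w) = f x := by rw [map_add, hfw, add_zero]
    have hxw := uniq (x + w) hxwC hfxw
    have hw0 : w = 0 := by
      have := hxw
      rwa [add_eq_left] at this
    rw [hw0] at hwnorm
    simp at hwnorm
end

section
/- Let X be a finite-dimensional real normed space and let K, A ⊂ X satisfy condition (H), and let F_A : K → ℝ₊ be defined by F_A(x) := max{t ≥ 0 : x ∈ tA} (with the convention 0·A := K). Then for every γ ≥ 0 one has {x ∈ K : F_A(x) ≥ γ} = γA (where 0·A = K), and consequently F_A is upper semicontinuous on K. Moreover F_A is positively homogeneous (F_A(tx) = tF_A(x) for x ∈ K, t ≥ 0), x ∈ F_A(x)·A for every x ∈ K, and int K ⊂ {tx : t > 0, x ∈ A} = {x ∈ K : F_A(x) > 0}. -/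
open Set Filter Topology Pointwise

variable {X : Type*} [NormedAddCommGroup X] [NormedSpace ℝ X]

/-- The set `t·A`, with the convention `0·A := K`. -/
noncomputable def scaled (K A : Set X) (t : ℝ) : Set X := if t = 0 then K else t • A

/-- `F_A(x) := max {t ≥ 0 : x ∈ tA}` (with the convention `0·A := K`), realized as a
supremum; under condition (H) the set `{t ≥ 0 : x ∈ tA}` is a compact interval
containing `0`, so the supremum is a maximum. -/
noncomputable def FA (K A : Set X) (x : X) : ℝ :=
  sSup {t : ℝ | 0 ≤ t ∧ x ∈ scaled K A t}

/-- `ℙA = {t • a : t > 0, a ∈ A}`. -/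
def posScaled (A : Set X) : Set X := {x | ∃ t : ℝ, 0 < t ∧ ∃ a ∈ A, x = t • a}

/-- Let `K, A` satisfy condition (H) in a finite-dimensional real normed
space. Then `{x ∈ K : F_A x ≥ γ} = γA` for all `γ ≥ 0`, `F_A` is upper semicontinuous on
`K`, `F_A` is positively homogeneous, `x ∈ F_A(x)·A` for every `x ∈ K`, and
`int K ⊆ ℙA = {x ∈ K : F_A x > 0}`. -/
theorem stmt13 [FiniteDimensional ℝ X] [Nontrivial X]
    (hdim : 2 ≤ Module.finrank ℝ X)
    (K A : Set X)
    (hKconv : Convex ℝ K) (hKclosed : IsClosed K)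
    (hKcone : ∀ t : ℝ, 0 ≤ t → ∀ x ∈ K, t • x ∈ K)
    (hKpointed : K ∩ (-K) = {0}) (hKint : (interior K).Nonempty)
    (hAne : A.Nonempty) (hAclosed : IsClosed A)
    (hAK : A + K = A) (hAsub : A ⊆ K \ {0}) :
    (∀ γ : ℝ, 0 ≤ γ → {x ∈ K | γ ≤ FA K A x} = scaled K A γ) ∧
    UpperSemicontinuousOn (FA K A) K ∧
    (∀ x ∈ K, ∀ t : ℝ, 0 ≤ t → FA K A (t • x) = t * FA K A x) ∧
    (∀ x ∈ K, x ∈ scaled K A (FA K A x)) ∧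
    interior K ⊆ posScaled A ∧
    posScaled A = {x ∈ K | 0 < FA K A x} := by
  have h0A : (0:X) ∉ A := fun h => (hAsub h).2 rfl
  have hAsubK : A ⊆ K := fun a ha => (hAsub ha).1
  have h0K : (0:X) ∈ K := by
    obtain ⟨a, ha⟩ := hAne
    simpa using hKcone 0 le_rfl a (hAsubK ha)
  -- A is closed upward under scaling by c ≥ 1
  have hup : ∀ a ∈ A, ∀ c : ℝ, 1 ≤ c → c • a ∈ A := by
    intro a ha c hc
    have h : c • a = a + (c - 1) • a := by rw [sub_smul, one_smul]; abel
    rw [h, ← hAK]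
    exact Set.add_mem_add ha (hKcone _ (by linarith) a (hAsubK ha))
  -- membership in `scaled` for nonzero t
  have hscaled : ∀ (t : ℝ), t ≠ 0 → ∀ x : X, (x ∈ scaled K A t ↔ t⁻¹ • x ∈ A) := by
    intro t ht x
    rw [scaled, if_neg ht]
    exact mem_smul_set_iff_inv_smul_mem₀ ht A x
  -- A is bounded away from 0
  obtain ⟨δ, hδ, hδA⟩ : ∃ δ > 0, ∀ a ∈ A, δ ≤ ‖a‖ := by
    have h : Aᶜ ∈ 𝓝 (0:X) := hAclosed.isOpen_compl.mem_nhds h0A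
    rcases Metric.mem_nhds_iff.1 h with ⟨ε, hε, hsub⟩
    refine ⟨ε/2, by positivity, fun a ha => ?_⟩
    by_contra hcon
    push_neg at hcon
    exact hsub (by simpa [Metric.mem_ball, dist_zero_right] using lt_trans hcon (by linarith)) ha
  -- boundedness of the defining set
  have hbdd : ∀ x : X, BddAbove {t : ℝ | 0 ≤ t ∧ x ∈ scaled K A t} := by
    intro x
    refine ⟨‖x‖ / δ, fun t ht => ?_⟩
    rcases eq_or_lt_of_le ht.1 with h | h
    · rw [← h]; positivity
    · have hx : t⁻¹ • x ∈ A := (hscaled t h.ne' x).1 ht.2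
      have hd := hδA _ hx
      rw [norm_smul, norm_inv, Real.norm_eq_abs, abs_of_pos h] at hd
      rw [le_div_iff₀ hδ]
      have h3 := mul_le_mul_of_nonneg_left hd h.le
      rwa [← mul_assoc, mul_inv_cancel₀ h.ne', one_mul] at h3
  have hmemS : ∀ x : X, ∀ t : ℝ, 0 ≤ t → x ∈ scaled K A t → t ≤ FA K A x := by
    intro x t ht hx
    exact le_csSup (hbdd x) ⟨ht, hx⟩
  have hFnonneg : ∀ x ∈ K, 0 ≤ FA K A x := by
    intro x hx
    exact hmemS x 0 le_rfl (by rw [scaled, if_pos rfl]; exact hx)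
  -- downward closedness
  have hdown : ∀ x : X, ∀ s t : ℝ, 0 < s → s ≤ t → x ∈ scaled K A t → x ∈ scaled K A s := by
    intro x s t hs hst hx
    have ht : 0 < t := hs.trans_le hst
    rw [hscaled t ht.ne'] at hx
    rw [hscaled s hs.ne']
    have h : s⁻¹ • x = (t/s) • (t⁻¹ • x) := by
      rw [smul_smul]; congr 1; field_simp
    rw [h]
    exact hup _ hx _ ((one_le_div hs).2 hst)
  -- the supremum is attained
  have hmax : ∀ x ∈ K, x ∈ scaled K A (FA K A x) := by
    intro x hx
    rcases eq_or_lt_of_le (hFnonneg x hx) with h | h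
    · rw [scaled, if_pos h.symm]
      exact hx
    · have hIoo : ∀ s : ℝ, 0 < s → s < FA K A x → s⁻¹ • x ∈ A := by
        intro s hs hsF
        have hne : Set.Nonempty {t : ℝ | 0 ≤ t ∧ x ∈ scaled K A t} :=
          ⟨0, le_rfl, by rw [scaled, if_pos rfl]; exact hx⟩
        obtain ⟨t, htS, hst⟩ := exists_lt_of_lt_csSup hne hsF
        exact (hscaled s hs.ne' x).1 (hdown x s t hs hst.le htS.2)
      have hcont : Tendsto (fun t : ℝ => t⁻¹ • x) (𝓝[<] (FA K A x)) (𝓝 ((FA K A x)⁻¹ • x)) :=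
        (((continuousAt_inv₀ h.ne').smul continuousAt_const).tendsto).mono_left nhdsWithin_le_nhds
      have hev : ∀ᶠ t in 𝓝[<] (FA K A x), t⁻¹ • x ∈ A := by
        filter_upwards [Ioo_mem_nhdsLT_of_mem
          (show FA K A x ∈ Ioc (FA K A x / 2) (FA K A x) from ⟨by linarith, le_rfl⟩)] with t ht
        exact hIoo t (lt_trans (by linarith) ht.1) ht.2
      have hmem : (FA K A x)⁻¹ • x ∈ A := hAclosed.mem_of_tendsto hcont hev
      exact (hscaled _ h.ne' x).2 hmem
  -- superlevel sets
  have hlevel : ∀ γ : ℝ, 0 ≤ γ → {x ∈ K | γ ≤ FA K A x} = scaled K A γ := by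
    intro γ hγ
    rcases eq_or_lt_of_le hγ with h | h
    · rw [scaled, if_pos h.symm]
      ext x
      simp only [mem_setOf_eq]
      exact ⟨fun hx => hx.1, fun hx => ⟨hx, h ▸ hFnonneg x hx⟩⟩
    · ext x
      constructor
      · rintro ⟨hxK, hγF⟩
        exact hdown x γ (FA K A x) h hγF (hmax x hxK)
      · intro hx
        have hxK : x ∈ K := by
          have hm := (hscaled γ h.ne' x).1 hx
          have := hKcone γ h.le _ (hAsubK hm)
          rwa [smul_inv_smul₀ h.ne'] at this
        exact ⟨hxK, hmemS x γ h.le hx⟩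
  -- closedness of scaled sets for positive γ
  have hsclosed : ∀ γ : ℝ, γ ≠ 0 → IsClosed (scaled K A γ) := by
    intro γ hγ
    rw [scaled, if_neg hγ]
    exact hAclosed.smul_of_ne_zero hγ
  -- upper semicontinuity
  have husc : UpperSemicontinuousOn (FA K A) K := by
    intro x hx y hy
    obtain ⟨γ, h1, h2⟩ := exists_between hy
    have hγ0 : 0 < γ := lt_of_le_of_lt (hFnonneg x hx) h1
    have hx' : x ∉ scaled K A γ := fun hm => absurd (hmemS x γ hγ0.le hm) (not_le.2 h1)
    have hnb : (scaled K A γ)ᶜ ∈ 𝓝[K] x :=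
      nhdsWithin_le_nhds (((hsclosed γ hγ0.ne').isOpen_compl).mem_nhds hx')
    filter_upwards [hnb, self_mem_nhdsWithin] with z hz hzK
    by_contra hcon
    push_neg at hcon
    exact hz (hdown z γ (FA K A z) hγ0 (le_trans h2.le hcon) (hmax z hzK))
  -- FA 0 = 0
  have hF00 : FA K A (0:X) = 0 := by
    have h1 : {t : ℝ | 0 ≤ t ∧ (0:X) ∈ scaled K A t} = {0} := by
      ext t
      simp only [mem_setOf_eq, mem_singleton_iff]
      constructor
      · rintro ⟨ht, hmem⟩
        by_contra hne
        have hpos : 0 < t := lt_of_le_of_ne ht (Ne.symm hne)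
        rw [hscaled t hpos.ne', smul_zero] at hmem
        exact h0A hmem
      · rintro rfl
        exact ⟨le_rfl, by rw [scaled, if_pos rfl]; exact h0K⟩
    rw [FA, h1, csSup_singleton]
  -- one-sided homogeneity
  have hge : ∀ x ∈ K, ∀ t : ℝ, 0 < t → t * FA K A x ≤ FA K A (t • x) := by
    intro x hx t ht
    have hxF := hmax x hx
    rcases eq_or_lt_of_le (hFnonneg x hx) with h | h
    · rw [← h, mul_zero]
      exact hFnonneg _ (hKcone t ht.le x hx)
    · have hm : t • x ∈ scaled K A (t * FA K A x) := by
        rw [hscaled _ (by positivity)]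
        rw [hscaled _ h.ne'] at hxF
        have he : (t * FA K A x)⁻¹ • (t • x) = (FA K A x)⁻¹ • x := by
          rw [smul_smul]; congr 1; field_simp
        rw [he]; exact hxF
      exact hmemS _ _ (by positivity) hm
  -- homogeneity
  have hhom : ∀ x ∈ K, ∀ t : ℝ, 0 ≤ t → FA K A (t • x) = t * FA K A x := by
    intro x hx t ht
    rcases eq_or_lt_of_le ht with h | h
    · rw [← h, zero_smul, zero_mul, hF00]
    · refine le_antisymm ?_ (hge x hx t h)
      have h2 := hge (t • x) (hKcone t h.le x hx) t⁻¹ (by positivity)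
      rw [smul_smul, inv_mul_cancel₀ h.ne', one_smul] at h2
      calc FA K A (t • x) = t * (t⁻¹ * FA K A (t • x)) := by field_simp
        _ ≤ t * FA K A x := mul_le_mul_of_nonneg_left h2 h.le
  -- posScaled characterization
  have hpos : posScaled A = {x ∈ K | 0 < FA K A x} := by
    ext x
    constructor
    · rintro ⟨t, ht, a, ha, rfl⟩
      have hxK : t • a ∈ K := hKcone t ht.le a (hAsubK ha)
      refine ⟨hxK, lt_of_lt_of_le ht (hmemS _ t ht.le ?_)⟩
      rw [hscaled t ht.ne', inv_smul_smul₀ ht.ne']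
      exact ha
    · rintro ⟨hxK, hF⟩
      have hm := hmax x hxK
      rw [hscaled _ hF.ne'] at hm
      exact ⟨FA K A x, hF, _, hm, (smul_inv_smul₀ hF.ne' x).symm⟩
  -- interior K ⊆ posScaled A
  have hint : interior K ⊆ posScaled A := by
    intro x hx
    obtain ⟨a₀, ha₀⟩ := hAne
    obtain ⟨r, hr, hball⟩ := Metric.isOpen_iff.1 isOpen_interior x hx
    set ε := r / (2 * (‖a₀‖ + 1)) with hε
    have hεpos : 0 < ε := by positivity
    have hεn : ε * (‖a₀‖ + 1) = r / 2 := by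
      rw [hε]; field_simp
    have hk : x - ε • a₀ ∈ K := by
      apply interior_subset
      apply hball
      rw [Metric.mem_ball, dist_eq_norm,
        show x - ε • a₀ - x = -(ε • a₀) by abel, norm_neg, norm_smul,
        Real.norm_eq_abs, abs_of_pos hεpos]
      nlinarith [norm_nonneg a₀]
    refine ⟨ε, hεpos, a₀ + ε⁻¹ • (x - ε • a₀), ?_, ?_⟩
    · rw [← hAK]
      exact Set.add_mem_add ha₀ (hKcone ε⁻¹ (by positivity) _ hk)
    · rw [smul_add, smul_inv_smul₀ hεpos.ne']; abel
  exact ⟨hlevel, husc, hhom, hmax, hint, hpos⟩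
end

section
/- Let X be a finite-dimensional real normed space, let K, A ⊂ X satisfy condition (H), and let F_A : K → ℝ₊ be defined by F_A(x) := max{t ≥ 0 : x ∈ tA} (with the convention 0·A := K). Then the following are equivalent: (a) A is convex; (b) F_A is quasiconcave on K; (c) F_A is concave on K. -/
open Set Filter Topology Pointwise

variable {X : Type*} [NormedAddCommGroup X] [NormedSpace ℝ X]

/-- Let `K, A` satisfy condition (H) in a finite-dimensional real normed
space. The following are equivalent: (a) `A` is convex; (b) `F_A` is quasiconcave on `K`;
(c) `F_A` is concave on `K`. -/
theorem stmt14 [FiniteDimensional ℝ X] [Nontrivial X]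
    (hdim : 2 ≤ Module.finrank ℝ X)
    (K A : Set X)
    (hKconv : Convex ℝ K) (hKclosed : IsClosed K)
    (hKcone : ∀ t : ℝ, 0 ≤ t → ∀ x ∈ K, t • x ∈ K)
    (hKpointed : K ∩ (-K) = {0}) (hKint : (interior K).Nonempty)
    (hAne : A.Nonempty) (hAclosed : IsClosed A)
    (hAK : A + K = A) (hAsub : A ⊆ K \ {0}) :
    (Convex ℝ A ↔
      (∀ x ∈ K, ∀ y ∈ K, ∀ t : ℝ, t ∈ Icc (0 : ℝ) 1 →
        min (FA K A x) (FA K A y) ≤ FA K A (t • x + (1 - t) • y))) ∧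
    ((∀ x ∈ K, ∀ y ∈ K, ∀ t : ℝ, t ∈ Icc (0 : ℝ) 1 →
        min (FA K A x) (FA K A y) ≤ FA K A (t • x + (1 - t) • y)) ↔
      ConcaveOn ℝ K (FA K A)) := by
  classical
  have h0A : (0 : X) ∉ A := fun h => (hAsub h).2 rfl
  have hAsubK : A ⊆ K := fun a ha => (hAsub ha).1
  have hAK' : ∀ a ∈ A, ∀ k ∈ K, a + k ∈ A := by
    intro a ha k hk
    rw [← hAK]; exact Set.add_mem_add ha hk
  obtain ⟨a0, ha0⟩ := hAne
  have hδpos : 0 < Metric.infDist (0 : X) A := by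
    rcases (Metric.infDist_nonneg (x := (0:X)) (s := A)).lt_or_eq with h | h
    · exact h
    · exact absurd ((hAclosed.mem_iff_infDist_zero ⟨a0, ha0⟩).mpr h.symm) h0A
  have hδle : ∀ a ∈ A, Metric.infDist (0 : X) A ≤ ‖a‖ := by
    intro a ha
    simpa [dist_zero_left] using Metric.infDist_le_dist_of_mem (x := (0:X)) ha
  have hbdd : ∀ x : X, BddAbove {t : ℝ | 0 ≤ t ∧ x ∈ scaled K A t} := by
    intro x
    refine ⟨‖x‖ / Metric.infDist (0 : X) A, fun t ht => ?_⟩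
    rcases ht.1.lt_or_eq with h | h
    · have hxA : x ∈ t • A := by
        have := ht.2; simpa [scaled, h.ne'] using this
      obtain ⟨a, ha, hax⟩ := hxA
      rw [le_div_iff₀ hδpos]
      calc t * Metric.infDist (0:X) A ≤ t * ‖a‖ := by
            exact mul_le_mul_of_nonneg_left (hδle a ha) h.le
        _ = ‖x‖ := by rw [← hax, norm_smul, Real.norm_eq_abs, abs_of_pos h]
    · rw [← h]; positivity
  have h0mem : ∀ x ∈ K, (0:ℝ) ∈ {t : ℝ | 0 ≤ t ∧ x ∈ scaled K A t} := by
    intro x hx; exact ⟨le_rfl, by simpa [scaled] using hx⟩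
  have hFA_nonneg : ∀ x ∈ K, 0 ≤ FA K A x := fun x hx => le_csSup (hbdd x) (h0mem x hx)
  have hmem_le : ∀ (x : X) (s : ℝ), 0 < s → x ∈ s • A → s ≤ FA K A x := by
    intro x s hs hxs
    exact le_csSup (hbdd x) ⟨hs.le, by simpa [scaled, hs.ne'] using hxs⟩
  have hdown : ∀ (x : X) (s t : ℝ), 0 < s → s ≤ t → x ∈ t • A → x ∈ s • A := by
    intro x s t hs hst hxt
    obtain ⟨a, ha, hax⟩ := hxt
    have haK : a ∈ K := hAsubK ha
    have hcoef : (0:ℝ) ≤ t / s - 1 := by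
      rw [sub_nonneg, le_div_iff₀ hs, one_mul]; exact hst
    have hmemA : (t / s) • a ∈ A := by
      have : (t / s) • a = a + (t / s - 1) • a := by
        rw [sub_smul, one_smul]; abel
      rw [this]
      exact hAK' a ha _ (hKcone _ hcoef a haK)
    have hax' : t • a = x := hax
    have : s • ((t / s) • a) = x := by
      rw [smul_smul, mul_div_cancel₀ _ hs.ne', hax']
    exact ⟨(t / s) • a, hmemA, this⟩
  have hle_mem : ∀ x ∈ K, ∀ s : ℝ, 0 < s → s ≤ FA K A x → x ∈ s • A := by
    intro x hx s hs hle
    have hSne : {t : ℝ | 0 ≤ t ∧ x ∈ scaled K A t}.Nonempty := ⟨0, h0mem x hx⟩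
    have key : ∀ r ∈ Set.Ioo (0:ℝ) s, r⁻¹ • x ∈ A := by
      intro r hr
      have hrs : r < FA K A x := lt_of_lt_of_le hr.2 hle
      obtain ⟨t', ht', hrt'⟩ := exists_lt_of_lt_csSup hSne hrs
      have ht'pos : 0 < t' := lt_trans hr.1 hrt'
      have hxt' : x ∈ t' • A := by simpa [scaled, ht'pos.ne'] using ht'.2
      obtain ⟨a, ha, hax⟩ := hdown x r t' hr.1 hrt'.le hxt'
      rw [← hax, inv_smul_smul₀ hr.1.ne']; exact ha
    have hne : (𝓝[Set.Ioo (0:ℝ) s] s).NeBot := by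
      rw [← mem_closure_iff_nhdsWithin_neBot, closure_Ioo hs.ne]
      exact ⟨hs.le, le_rfl⟩
    have htend : Filter.Tendsto (fun r : ℝ => r⁻¹ • x) (𝓝[Set.Ioo (0:ℝ) s] s)
        (𝓝 (s⁻¹ • x)) :=
      (((continuousAt_inv₀ hs.ne').smul continuousAt_const)).tendsto.mono_left
        nhdsWithin_le_nhds
    have hmem : s⁻¹ • x ∈ A :=
      hAclosed.mem_of_tendsto htend (eventually_mem_nhdsWithin.mono key)
    exact ⟨s⁻¹ • x, hmem, smul_inv_smul₀ hs.ne' x⟩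
  -- (a) → (c)
  have conc : Convex ℝ A → ConcaveOn ℝ K (FA K A) := by
    intro hA
    refine ⟨hKconv, ?_⟩
    intro x hx y hy t u ht hu htu
    set α := FA K A x with hα
    set β := FA K A y with hβ
    have hα0 : 0 ≤ α := hFA_nonneg x hx
    have hβ0 : 0 ≤ β := hFA_nonneg y hy
    have hzK : t • x + u • y ∈ K := hKconv hx hy ht hu htu
    simp only [smul_eq_mul]
    rcases le_or_gt (t * α + u * β) 0 with hγ | hγ
    · exact le_trans hγ (hFA_nonneg _ hzK)
    · have main : t • x + u • y ∈ (t * α + u * β) • A := by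
        rcases (mul_nonneg ht hα0).lt_or_eq with h1 | h1
        · rcases (mul_nonneg hu hβ0).lt_or_eq with h2 | h2
          · -- both positive
            have hαpos : 0 < α := by nlinarith
            have hβpos : 0 < β := by nlinarith
            obtain ⟨a, ha, hax⟩ := hle_mem x hx α hαpos le_rfl
            obtain ⟨b, hb, hby⟩ := hle_mem y hy β hβpos le_rfl
            have hax' : α • a = x := hax
            have hby' : β • b = y := hby
            set γ := t * α + u * β with hγdef
            have hc : (t * α / γ) • a + (u * β / γ) • b ∈ A :=
              hA ha hb (div_nonneg h1.le hγ.le) (div_nonneg h2.le hγ.le)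
                (by field_simp; rw [hγdef])
            have heq : γ • ((t * α / γ) • a + (u * β / γ) • b) = t • x + u • y := by
              rw [smul_add, smul_smul, smul_smul]
              have e1 : γ * (t * α / γ) = t * α := by field_simp
              have e2 : γ * (u * β / γ) = u * β := by field_simp
              rw [e1, e2, mul_smul, mul_smul, hax', hby']
            exact heq ▸ Set.smul_mem_smul_set hc
          · -- u * β = 0, so t * α = γ > 0
            set γ := t * α + u * β with hγdef
            have hγ' : γ = t * α := by rw [hγdef, ← h2]; ring
            have hαpos : 0 < α := by
              rcases hα0.lt_or_eq with h | h; · exact h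
              · exfalso; rw [hγ'] at hγ; nlinarith
            obtain ⟨a, ha, hax⟩ := hle_mem x hx α hαpos le_rfl
            have hax' : α • a = x := hax
            have hyK' : (u / γ) • y ∈ K := hKcone _ (div_nonneg hu hγ.le) y hy
            have hc : a + (u / γ) • y ∈ A := hAK' a ha _ hyK'
            have heq : γ • (a + (u / γ) • y) = t • x + u • y := by
              rw [smul_add, smul_smul]
              have e2 : γ * (u / γ) = u := by field_simp
              rw [e2, hγ', mul_smul, hax']
            exact heq ▸ Set.smul_mem_smul_set hc
        · -- t * α = 0, so u * β = γ > 0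
          set γ := t * α + u * β with hγdef
          have hγ' : γ = u * β := by rw [hγdef, ← h1]; ring
          have hβpos : 0 < β := by
            rcases hβ0.lt_or_eq with h | h; · exact h
            · exfalso; rw [hγ'] at hγ; nlinarith
          obtain ⟨b, hb, hby⟩ := hle_mem y hy β hβpos le_rfl
          have hby' : β • b = y := hby
          have hxK' : (t / γ) • x ∈ K := hKcone _ (div_nonneg ht hγ.le) x hx
          have hc : b + (t / γ) • x ∈ A := hAK' b hb _ hxK'
          have heq : γ • (b + (t / γ) • x) = t • x + u • y := by
            rw [smul_add, smul_smul]
            have e2 : γ * (t / γ) = t := by field_simp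
            rw [e2, hγ', mul_smul, hby', add_comm]
          exact heq ▸ Set.smul_mem_smul_set hc
      exact hmem_le _ _ hγ main
  -- (c) → (b)
  have quasi_of_conc : ConcaveOn ℝ K (FA K A) →
      (∀ x ∈ K, ∀ y ∈ K, ∀ t : ℝ, t ∈ Icc (0 : ℝ) 1 →
        min (FA K A x) (FA K A y) ≤ FA K A (t • x + (1 - t) • y)) := by
    intro hconc x hx y hy t ht
    have h1 : (0:ℝ) ≤ 1 - t := by linarith [ht.2]
    have hc := hconc.2 hx hy ht.1 h1 (by ring)
    refine le_trans ?_ hc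
    simp only [smul_eq_mul]
    nlinarith [mul_le_mul_of_nonneg_left (min_le_left (FA K A x) (FA K A y)) ht.1,
      mul_le_mul_of_nonneg_left (min_le_right (FA K A x) (FA K A y)) h1]
  -- (b) → (a)
  have conv_of_quasi : (∀ x ∈ K, ∀ y ∈ K, ∀ t : ℝ, t ∈ Icc (0 : ℝ) 1 →
        min (FA K A x) (FA K A y) ≤ FA K A (t • x + (1 - t) • y)) → Convex ℝ A := by
    intro hq a ha b hb lam mu hlam hmu hsum
    have haK := hAsubK ha
    have hbK := hAsubK hb
    have hFa : 1 ≤ FA K A a := hmem_le a 1 one_pos (by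
      rw [one_smul]; exact ha)
    have hFb : 1 ≤ FA K A b := hmem_le b 1 one_pos (by
      rw [one_smul]; exact hb)
    have hmu' : mu = 1 - lam := by linarith
    have hzK : lam • a + mu • b ∈ K := hKconv haK hbK hlam hmu hsum
    have h := hq a haK b hbK lam ⟨hlam, by linarith⟩
    rw [← hmu'] at h
    have h1 : 1 ≤ FA K A (lam • a + mu • b) := le_trans (le_min hFa hFb) h
    have := hle_mem _ hzK 1 one_pos h1
    rwa [one_smul] at this
  exact ⟨⟨fun hA => quasi_of_conc (conc hA), conv_of_quasi⟩,
    ⟨fun hq => conc (conv_of_quasi hq), quasi_of_conc⟩⟩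
end

section
/- Let X be a finite-dimensional real normed space, let K, A ⊂ X satisfy condition (H), and let F_A : K → ℝ₊ be defined by F_A(x) := max{t ≥ 0 : x ∈ tA} (with the convention 0·A := K). Then F_A is continuous at every point of (K \ ℙA) ∪ int K, where ℙA := {tx : t > 0, x ∈ A}. In particular, if A ⊂ int K then F_A is continuous on K. -/
open Set Filter Topology Pointwise

variable {X : Type*} [NormedAddCommGroup X] [NormedSpace ℝ X]

/-- Let `K, A` satisfy condition (H) in a finite-dimensional real normed
space. Then `F_A` is continuous (in the subspace topology of `K`) at every point of
`(K \ ℙA) ∪ int K`; in particular, if `A ⊆ int K` then `F_A` is continuous on `K`. -/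
theorem stmt15 [FiniteDimensional ℝ X] [Nontrivial X]
    (hdim : 2 ≤ Module.finrank ℝ X)
    (K A : Set X)
    (hKconv : Convex ℝ K) (hKclosed : IsClosed K)
    (hKcone : ∀ t : ℝ, 0 ≤ t → ∀ x ∈ K, t • x ∈ K)
    (hKpointed : K ∩ (-K) = {0}) (hKint : (interior K).Nonempty)
    (hAne : A.Nonempty) (hAclosed : IsClosed A)
    (hAK : A + K = A) (hAsub : A ⊆ K \ {0}) :
    (∀ x ∈ (K \ posScaled A) ∪ interior K, ContinuousWithinAt (FA K A) K x) ∧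
    (A ⊆ interior K → ContinuousOn (FA K A) K) := by
  have hAK' : A ⊆ K := fun a ha => (hAsub ha).1
  have h0A : (0 : X) ∉ A := fun h => (hAsub h).2 rfl
  set d := Metric.infDist (0 : X) A with hd_def
  have hd : 0 < d := (hAclosed.notMem_iff_infDist_pos hAne).1 h0A
  -- membership in `scaled` for nonzero parameter
  have hmem : ∀ (t : ℝ), t ≠ 0 → ∀ x : X, (x ∈ scaled K A t ↔ t⁻¹ • x ∈ A) := by
    intro t ht x
    simp only [scaled, if_neg ht]
    exact mem_smul_set_iff_inv_smul_mem₀ ht A x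
  set S : X → Set ℝ := fun x => {t : ℝ | 0 ≤ t ∧ x ∈ scaled K A t} with hS
  have hFAdef : ∀ x, FA K A x = sSup (S x) := fun _ => rfl
  have hnorm : ∀ {a : X}, a ∈ A → d ≤ ‖a‖ := by
    intro a ha
    simpa using Metric.infDist_le_dist_of_mem (x := (0 : X)) ha
  have hbound : ∀ x t, t ∈ S x → t ≤ ‖x‖ / d := by
    rintro x t ⟨ht0, htx⟩
    rcases eq_or_lt_of_le ht0 with h | h
    · rw [← h]; positivity
    · have ha : t⁻¹ • x ∈ A := (hmem t (ne_of_gt h) x).1 htx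
      have h1 : d ≤ ‖t⁻¹ • x‖ := hnorm ha
      rw [norm_smul, norm_inv, Real.norm_eq_abs, abs_of_pos h] at h1
      rw [le_div_iff₀ hd]
      calc t * d ≤ t * (t⁻¹ * ‖x‖) := by
            apply mul_le_mul_of_nonneg_left h1 h.le
        _ = ‖x‖ := by field_simp
  have hbdd : ∀ x, BddAbove (S x) := fun x => ⟨‖x‖ / d, fun t ht => hbound x t ht⟩
  have h0S : ∀ x ∈ K, (0 : ℝ) ∈ S x := by
    intro x hx; exact ⟨le_refl 0, by simp [scaled, hx]⟩
  have hFA0 : ∀ x ∈ K, 0 ≤ FA K A x := fun x hx => le_csSup (hbdd x) (h0S x hx)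
  -- downward closedness on positive reals
  have hdown : ∀ x, ∀ s t : ℝ, 0 < s → s ≤ t → t ∈ S x → s ∈ S x := by
    rintro x s t hs hst ⟨ht0, htx⟩
    have ht : 0 < t := lt_of_lt_of_le hs hst
    have ha : t⁻¹ • x ∈ A := (hmem t ht.ne' x).1 htx
    refine ⟨hs.le, (hmem s hs.ne' x).2 ?_⟩
    have hc : (0 : ℝ) ≤ s⁻¹ - t⁻¹ := by
      have := inv_anti₀ hs hst
      linarith
    have hk : ((s⁻¹ - t⁻¹) * t) • (t⁻¹ • x) ∈ K := by
      apply hKcone _ (by positivity) _ (hAK' ha)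
    have hsum : t⁻¹ • x + ((s⁻¹ - t⁻¹) * t) • (t⁻¹ • x) = s⁻¹ • x := by
      rw [smul_smul]
      rw [← add_smul]
      congr 1
      field_simp
      ring
    have : t⁻¹ • x + ((s⁻¹ - t⁻¹) * t) • (t⁻¹ • x) ∈ A + K := add_mem_add ha hk
    rwa [hAK, hsum] at this
  -- the supremum is attained
  have hattain : ∀ x ∈ K, FA K A x ∈ S x := by
    intro x hx
    rcases eq_or_lt_of_le (hFA0 x hx) with h | h
    · rw [← h]; exact h0S x hx
    · set T := FA K A x with hT
      have hIoo : ∀ t ∈ Ioo (0 : ℝ) T, t⁻¹ • x ∈ A := by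
        rintro t ⟨ht0, htT⟩
        obtain ⟨t', ht'S, htt'⟩ := exists_lt_of_lt_csSup ⟨0, h0S x hx⟩ htT
        have := hdown x t t' ht0 htt'.le ht'S
        exact (hmem t ht0.ne' x).1 this.2
      have hTA : T⁻¹ • x ∈ A := by
        have htend : Tendsto (fun t : ℝ => t⁻¹ • x) (𝓝[<] T) (𝓝 (T⁻¹ • x)) := by
          apply Tendsto.mono_left _ nhdsWithin_le_nhds
          exact ((continuousAt_inv₀ h.ne').smul continuousAt_const)
        have hev : ∀ᶠ t in 𝓝[<] T, t⁻¹ • x ∈ A := by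
          filter_upwards [Ioo_mem_nhdsLT_of_mem (by constructor <;> [exact h; rfl] :
            T ∈ Ioc (0 : ℝ) T)] with t ht using hIoo t ht
        exact hAclosed.mem_of_tendsto htend hev
      exact ⟨h.le, (hmem T h.ne' x).2 hTA⟩
  -- upper semicontinuity at every point of K
  have husc : ∀ x ∈ K, ∀ ε > (0 : ℝ), ∀ᶠ y in 𝓝 x, FA K A y < FA K A x + ε := by
    intro x hx ε hε
    obtain ⟨c, hc⟩ : ∃ c : ℝ, c = FA K A x + ε / 2 := ⟨_, rfl⟩
    have hc0 : 0 < c := by have := hFA0 x hx; rw [hc]; linarith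
    have hC : IsClosed (c • A) := hAclosed.smul_of_ne_zero hc0.ne'
    have hxC : x ∉ c • A := by
      intro hmemC
      have : c ∈ S x := ⟨hc0.le, by simp only [scaled, if_neg hc0.ne']; exact hmemC⟩
      have := le_csSup (hbdd x) this
      simp only [← hFAdef] at this
      linarith
    have hU : (c • A)ᶜ ∈ 𝓝 x := hC.isOpen_compl.mem_nhds hxC
    filter_upwards [hU] with y hy
    have hle : FA K A y ≤ c := by
      apply Real.sSup_le _ hc0.le
      intro t ht
      by_contra hlt
      push_neg at hlt
      have : c ∈ S y := hdown y c t hc0 hlt.le ht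
      exact hy (by simpa [scaled, if_neg hc0.ne'] using this.2)
    linarith
  -- main continuity claim
  have main : ∀ x ∈ (K \ posScaled A) ∪ interior K, ContinuousWithinAt (FA K A) K x := by
    intro x hxmem
    have hxK : x ∈ K := by
      rcases hxmem with h | h
      · exact h.1
      · exact interior_subset h
    rw [ContinuousWithinAt, tendsto_order]
    constructor
    · -- lower semicontinuity
      intro b hb
      rcases lt_or_ge b 0 with hb0 | hb0
      · filter_upwards [self_mem_nhdsWithin] with y hy
        exact lt_of_lt_of_le hb0 (hFA0 y hy)
      · -- here FA x > b ≥ 0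
        obtain ⟨T, hT⟩ : ∃ T : ℝ, T = FA K A x := ⟨_, rfl⟩
        rw [← hT] at hb
        have hTpos : 0 < T := lt_of_le_of_lt hb0 hb
        -- x must be in the interior of K
        have hxint : x ∈ interior K := by
          rcases hxmem with h | h
          · exfalso
            apply h.2
            have := hattain x hxK
            rw [← hT] at this
            have hxA : T⁻¹ • x ∈ A := (hmem T hTpos.ne' x).1 this.2
            exact ⟨T, hTpos, T⁻¹ • x, hxA, by rw [smul_smul]; field_simp; rw [one_smul]⟩
          · exact h
        obtain ⟨s, hs⟩ : ∃ s : ℝ, s = (b + T) / 2 := ⟨_, rfl⟩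
        have hbs : b < s := by rw [hs]; linarith
        have hsT : s < T := by rw [hs]; linarith
        have hs0 : 0 < s := lt_of_le_of_lt hb0 hbs
        have ha : T⁻¹ • x ∈ A := by
          have := hattain x hxK
          rw [← hT] at this
          exact (hmem T hTpos.ne' x).1 this.2
        obtain ⟨cc, hcc⟩ : ∃ cc : ℝ, cc = s⁻¹ - T⁻¹ := ⟨_, rfl⟩
        have hcc0 : 0 < cc := by
          rw [hcc, sub_pos]
          exact inv_strictAnti₀ hs0 hsT
        have hcx : cc • x ∈ interior K := by
          have hopen : IsOpen (cc • interior K) := isOpen_interior.smul₀ hcc0.ne'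
          have hsub : cc • interior K ⊆ K := by
            rintro z ⟨y, hy, rfl⟩
            exact hKcone cc hcc0.le y (interior_subset hy)
          exact interior_maximal hsub hopen (smul_mem_smul_set hxint)
        have hxintA : s⁻¹ • x ∈ interior A := by
          have hopen : IsOpen (A + interior K) := isOpen_interior.add_left
          have hsub : A + interior K ⊆ A := by
            conv_rhs => rw [← hAK]
            exact add_subset_add_left interior_subset
          have hmemA : s⁻¹ • x ∈ A + interior K := by
            have heq : s⁻¹ • x = T⁻¹ • x + cc • x := by
              rw [hcc, sub_smul]; abel
            rw [heq]
            exact add_mem_add ha hcx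
          exact interior_maximal hsub hopen hmemA
        have hUopen : IsOpen ((fun y : X => s⁻¹ • y) ⁻¹' interior A) :=
          isOpen_interior.preimage (continuous_const_smul _)
        have hxU : x ∈ (fun y : X => s⁻¹ • y) ⁻¹' interior A := hxintA
        filter_upwards [mem_nhdsWithin_of_mem_nhds (hUopen.mem_nhds hxU)] with y hy
        have : s ∈ S y := ⟨hs0.le, (hmem s hs0.ne' y).2 (interior_subset hy)⟩
        exact lt_of_lt_of_le hbs (le_csSup (hbdd y) this)
    · -- upper semicontinuity
      intro b hb
      have hε : 0 < b - FA K A x := by linarith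
      filter_upwards [mem_nhdsWithin_of_mem_nhds (husc x hxK _ hε)] with y hy
      linarith
  refine ⟨main, ?_⟩
  intro hAint x hxK
  apply main
  by_cases hxP : x ∈ posScaled A
  · right
    obtain ⟨t, ht, a, haA, rfl⟩ := hxP
    have hopen : IsOpen (t • interior K) := isOpen_interior.smul₀ ht.ne'
    have hsub : t • interior K ⊆ K := by
      rintro z ⟨y, hy, rfl⟩
      exact hKcone t ht.le y (interior_subset hy)
    exact interior_maximal hsub hopen (smul_mem_smul_set (hAint haA))
  · exact Or.inl ⟨hxK, hxP⟩
end

section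
/- Let X be a finite-dimensional real normed space, let K, A ⊂ X satisfy condition (H), and assume K is polyhedral, i.e. K = {x ∈ X : ⟨x, x_i*⟩ ≥ 0 for i = 1,…,m} for finitely many nonzero x_1*,…,x_m* ∈ X* with ∩_{i=1}^m ker x_i* = {0} and {x : ⟨x, x_i*⟩ > 0 for all i} ≠ ∅. Then F_A : K → ℝ₊, F_A(x) := max{t ≥ 0 : x ∈ tA} (convention 0·A := K), is continuous on K. -/
open Set Filter Topology Pointwise

variable {X : Type*} [NormedAddCommGroup X] [NormedSpace ℝ X]

/-- Let `K, A` satisfy condition (H) in a finite-dimensional real normed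
space and assume `K` is polyhedral:
`K = {x : ⟨x, x_i*⟩ ≥ 0, i = 1,…,m}` with nonzero functionals `x_i*` whose kernels have
trivial intersection and with `{x : ⟨x, x_i*⟩ > 0 ∀ i} ≠ ∅`. Then `F_A` is continuous
on `K`. -/
theorem stmt16 [FiniteDimensional ℝ X] [Nontrivial X]
    (hdim : 2 ≤ Module.finrank ℝ X)
    (K A : Set X)
    (hKconv : Convex ℝ K) (hKclosed : IsClosed K)
    (hKcone : ∀ t : ℝ, 0 ≤ t → ∀ x ∈ K, t • x ∈ K)
    (hKpointed : K ∩ (-K) = {0}) (hKint : (interior K).Nonempty)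
    (hAne : A.Nonempty) (hAclosed : IsClosed A)
    (hAK : A + K = A) (hAsub : A ⊆ K \ {0})
    (m : ℕ) (φ : Fin m → (X →L[ℝ] ℝ))
    (hφne : ∀ i, φ i ≠ 0)
    (hK : K = {x : X | ∀ i, 0 ≤ φ i x})
    (hker : ∀ x : X, (∀ i, φ i x = 0) → x = 0)
    (hpos : {x : X | ∀ i, 0 < φ i x}.Nonempty) :
    ContinuousOn (FA K A) K := by
  classical
  set S : X → Set ℝ := fun y => {t : ℝ | 0 ≤ t ∧ y ∈ scaled K A t} with hS
  have hFS : ∀ y, FA K A y = sSup (S y) := fun y => rfl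
  -- A stays away from 0
  have hA0 : (0 : X) ∉ A := fun h => (hAsub h).2 rfl
  set δ : ℝ := Metric.infDist 0 A with hδdef
  have hδpos : 0 < δ := (hAclosed.notMem_iff_infDist_pos hAne).mp hA0
  have hδ : ∀ a ∈ A, δ ≤ ‖a‖ := by
    intro a ha
    simpa [dist_zero_left] using Metric.infDist_le_dist_of_mem (x := (0 : X)) ha
  -- membership characterization for positive t
  have hmemS : ∀ (y : X) (t : ℝ), 0 < t → (t ∈ S y ↔ ∃ a ∈ A, t • a = y) := by
    intro y t ht
    constructor
    · intro hty
      have := hty.2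
      rw [scaled, if_neg ht.ne'] at this
      exact Set.mem_smul_set.mp this
    · intro h
      exact ⟨ht.le, by rw [scaled, if_neg ht.ne']; exact Set.mem_smul_set.mpr h⟩
  -- upper bound on S y
  have hbound : ∀ (y : X) (t : ℝ), t ∈ S y → t ≤ ‖y‖ / δ := by
    intro y t hty
    rcases hty.1.eq_or_lt with h0 | hpos'
    · rw [← h0]; positivity
    · obtain ⟨a, haA, hay⟩ := (hmemS y t hpos').mp hty
      have hna : ‖y‖ = t * ‖a‖ := by
        rw [← hay, norm_smul, Real.norm_eq_abs, abs_of_pos hpos']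
      rw [le_div_iff₀ hδpos]
      have := hδ a haA
      nlinarith [this, hpos']
  have hbdd : ∀ y : X, BddAbove (S y) := fun y => ⟨‖y‖ / δ, fun t ht => hbound y t ht⟩
  have h0S : ∀ y ∈ K, (0 : ℝ) ∈ S y := by
    intro y hy
    exact ⟨le_refl 0, by rw [scaled, if_pos rfl]; exact hy⟩
  have hFA0 : ∀ y ∈ K, 0 ≤ FA K A y := fun y hy => le_csSup (hbdd y) (h0S y hy)
  -- key lower semicontinuity lemma
  have hlsc : ∀ x ∈ K, ∀ s t : ℝ, 0 < t → t < s → s ∈ S x →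
      ∀ᶠ y in 𝓝[K] x, t ∈ S y := by
    intro x hx s t ht hts hsS
    have hspos : 0 < s := ht.trans hts
    obtain ⟨a, haA, hxa⟩ := (hmemS x s hspos).mp hsS
    have hφx : ∀ i, φ i x = s * φ i a := by
      intro i; rw [← hxa]; simp
    have hev : ∀ᶠ y in 𝓝 x, ∀ i, 0 < φ i x → t * φ i x < s * φ i y := by
      rw [eventually_all]
      intro i
      by_cases hi : 0 < φ i x
      · have hopen : IsOpen {y : X | t * φ i x < s * φ i y} :=
          isOpen_lt continuous_const (continuous_const.mul (φ i).continuous)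
        have hxmem : x ∈ {y : X | t * φ i x < s * φ i y} := by
          simp only [Set.mem_setOf_eq]
          nlinarith [hi, hts, hspos, ht]
        filter_upwards [hopen.mem_nhds hxmem] with y hy _
        exact hy
      · exact Filter.Eventually.of_forall fun y hc => absurd hc hi
    filter_upwards [hev.filter_mono nhdsWithin_le_nhds, self_mem_nhdsWithin] with y hy hyK
    have hyK' : ∀ i, 0 ≤ φ i y := by rw [hK] at hyK; exact hyK
    have hxK' : ∀ i, 0 ≤ φ i x := by rw [hK] at hx; exact hx
    -- t⁻¹ • y - a ∈ K
    have hk : t⁻¹ • y - a ∈ K := by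
      rw [hK]
      intro i
      simp only [Set.mem_setOf_eq, map_sub, map_smul, smul_eq_mul]
      rcases (hxK' i).eq_or_lt with h0 | hposi
      · have hai : φ i a = 0 := by
          have := hφx i
          rw [← h0] at this
          exact (mul_eq_zero.mp this.symm).resolve_left hspos.ne'
        rw [hai, sub_zero]
        exact mul_nonneg (inv_nonneg.mpr ht.le) (hyK' i)
      · have hlt := hy i hposi
        rw [hφx i] at hlt
        rw [sub_nonneg, inv_mul_eq_div, le_div_iff₀ ht]
        nlinarith [hlt, hspos, ht]
    have hmemA : t⁻¹ • y ∈ A := by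
      rw [← hAK]
      exact ⟨a, haA, t⁻¹ • y - a, hk, by show a + (t⁻¹ • y - a) = t⁻¹ • y; rw [add_comm, sub_add_cancel]⟩
    refine (hmemS y t ht).mpr ⟨t⁻¹ • y, hmemA, ?_⟩
    rw [smul_smul, mul_inv_cancel₀ ht.ne', one_smul]
  -- main continuity
  intro x hx
  refine Metric.tendsto_nhds.mpr ?_
  intro ε hε
  -- upper bound eventually
  have hup : ∀ᶠ y in 𝓝[K] x, FA K A y < FA K A x + ε := by
    set c : ℝ := FA K A x + ε / 2 with hcdef
    have hcpos : 0 < c := by have := hFA0 x hx; rw [hcdef]; linarith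
    set R : ℝ := ‖x‖ + 1 with hRdef
    have hRpos : 0 < R := by positivity
    set D : Set X := (fun p : ℝ × X => p.1 • p.2) ''
        (Set.Icc c (R / δ) ×ˢ (A ∩ Metric.closedBall 0 (R / c))) with hDdef
    have hDcomp : IsCompact D := by
      refine IsCompact.image ?_ (continuous_fst.smul continuous_snd)
      exact isCompact_Icc.prod ((isCompact_closedBall 0 _).inter_left hAclosed)
    have hxD : x ∉ D := by
      rintro ⟨⟨s, a⟩, ⟨⟨hs1, _⟩, haA, _⟩, hsa⟩
      have hspos : 0 < s := hcpos.trans_le hs1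
      have hsS : s ∈ S x := (hmemS x s hspos).mpr ⟨a, haA, hsa⟩
      have := le_csSup (hbdd x) hsS
      rw [← hFS x] at this
      rw [hcdef] at hs1
      linarith
    have hDc : Dᶜ ∈ 𝓝 x := hDcomp.isClosed.isOpen_compl.mem_nhds hxD
    have hball : Metric.ball x 1 ∈ 𝓝 x := Metric.ball_mem_nhds x one_pos
    filter_upwards [mem_nhdsWithin_of_mem_nhds hDc, mem_nhdsWithin_of_mem_nhds hball,
      self_mem_nhdsWithin] with y hyD hyb hyK
    have hyR : ‖y‖ ≤ R := by
      have : dist y x < 1 := Metric.mem_ball.mp hyb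
      have h2 : ‖y‖ ≤ ‖x‖ + dist y x := by
        rw [dist_eq_norm]
        calc ‖y‖ = ‖x + (y - x)‖ := by rw [add_comm, sub_add_cancel]
          _ ≤ ‖x‖ + ‖y - x‖ := norm_add_le _ _
      rw [hRdef]; linarith
    have hle : FA K A y ≤ c := by
      rw [hFS y]
      refine csSup_le ⟨0, h0S y hyK⟩ ?_
      intro s hs
      by_contra hlt
      push_neg at hlt
      have hspos : 0 < s := hcpos.trans hlt
      obtain ⟨a, haA, hsa⟩ := (hmemS y s hspos).mp hs
      have hs2 : s ≤ R / δ := by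
        refine (hbound y s hs).trans ?_
        gcongr
      have hay : ‖y‖ = s * ‖a‖ := by
        rw [← hsa, norm_smul, Real.norm_eq_abs, abs_of_pos hspos]
      have haR : ‖a‖ ≤ R / c := by
        rw [le_div_iff₀ hcpos]
        nlinarith [hlt, norm_nonneg a, hyR, hay]
      exact hyD ⟨(s, a), ⟨⟨hlt.le, hs2⟩, haA, mem_closedBall_zero_iff.mpr haR⟩, hsa⟩
    rw [hcdef] at hle
    linarith
  -- lower bound eventually
  have hlow : ∀ᶠ y in 𝓝[K] x, FA K A x - ε < FA K A y := by
    by_cases h : FA K A x - ε < 0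
    · filter_upwards [self_mem_nhdsWithin] with y hy
      exact h.trans_le (hFA0 y hy)
    · push_neg at h
      have hεx : ε ≤ FA K A x := by linarith
      have h4 : FA K A x - ε / 4 < sSup (S x) := by rw [← hFS x]; linarith
      obtain ⟨s, hsS, hs⟩ := exists_lt_of_lt_csSup ⟨0, h0S x hx⟩ h4
      set t : ℝ := s - ε / 4 with htdef
      have htpos : 0 < t := by rw [htdef]; linarith
      have hts : t < s := by rw [htdef]; linarith
      filter_upwards [hlsc x hx s t htpos hts hsS] with y hty
      have := le_csSup (hbdd y) hty
      rw [← hFS y] at this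
      rw [htdef] at this
      linarith
  filter_upwards [hup, hlow] with y h1 h2
  rw [Real.dist_eq, abs_sub_lt_iff]
  constructor <;> linarith
end

section
/- Let X be a finite-dimensional real normed space, C ⊂ X a closed convex set, and x₀ ∈ C such that the cone ℝ₊(C − x₀) := {t(c − x₀) : t ≥ 0, c ∈ C} is not closed. Then there exists a sequence (xₙ) converging to x₀ such that for all n ≥ 1 and all λ ∈ (0,1), xₙ ∈ C and xₙ ∉ (1−λ)x₀ + λC. -/
open Set Filter Topology Pointwise

/-- Let `C` be a closed convex set in a nontrivial finite-dimensional
real normed space and `x₀ ∈ C` such that the cone `ℝ₊(C - x₀)` is not closed. Then there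
is a sequence `(xₙ)` converging to `x₀` with `xₙ ∈ C` and
`xₙ ∉ (1 - λ)x₀ + λC` for all `n` and all `λ ∈ (0,1)`. -/
theorem stmt17 {X : Type*} [NormedAddCommGroup X] [NormedSpace ℝ X]
    [FiniteDimensional ℝ X] [Nontrivial X]
    (C : Set X) (hCclosed : IsClosed C) (hCconv : Convex ℝ C)
    (x₀ : X) (hx₀ : x₀ ∈ C)
    (hnc : ¬ IsClosed {y : X | ∃ t : ℝ, 0 ≤ t ∧ ∃ c ∈ C, y = t • (c - x₀)}) :
    ∃ x : ℕ → X, Filter.Tendsto x Filter.atTop (𝓝 x₀) ∧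
      ∀ n : ℕ, x n ∈ C ∧
        ∀ l : ℝ, l ∈ Ioo (0 : ℝ) 1 → x n ∉ (fun c => (1 - l) • x₀ + l • c) '' C := by
  set K := {y : X | ∃ t : ℝ, 0 ≤ t ∧ ∃ c ∈ C, y = t • (c - x₀)} with hKdef
  -- get a point in the closure of K not in K
  obtain ⟨y, hyc, hyK⟩ : ∃ y, y ∈ closure K ∧ y ∉ K := by
    by_contra h
    push_neg at h
    exact hnc (closure_subset_iff_isClosed.mp fun z hz => h z hz)
  have hy0 : y ≠ 0 := by
    rintro rfl
    exact hyK ⟨0, le_refl 0, x₀, hx₀, by simp⟩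
  have hyn : ‖y‖ ≠ 0 := norm_ne_zero_iff.mpr hy0
  -- a sequence in K converging to y
  obtain ⟨f, hfK, hfy⟩ := mem_closure_iff_seq_limit.mp hyc
  choose t ht c hc hf using hfK
  set yhat := ‖y‖⁻¹ • y with hyhat
  -- x₀ + ε • yhat is never in C for ε > 0
  have hdir : ∀ ε : ℝ, 0 < ε → x₀ + ε • yhat ∉ C := by
    intro ε hε hmem
    apply hyK
    refine ⟨‖y‖ / ε, by positivity, x₀ + ε • yhat, hmem, ?_⟩
    rw [add_sub_cancel_left, smul_smul, div_mul_cancel₀ _ hε.ne', hyhat,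
      smul_inv_smul₀ hyn]
  -- normalized sequence tends to yhat
  have hgy : Tendsto (fun n => ‖f n‖⁻¹ • f n) atTop (𝓝 yhat) :=
    Tendsto.smul ((hfy.norm).inv₀ hyn) hfy
  have hne : ∀ᶠ n in atTop, f n ≠ 0 := hfy.eventually_ne hy0
  -- Key: for every ε > 0 there is a good point at distance ≤ ε
  have A : ∀ ε : ℝ, 0 < ε → ∃ e ∈ C, ‖e - x₀‖ ≤ ε ∧
      ∀ l : ℝ, l ∈ Ioo (0 : ℝ) 1 → e ∉ (fun c => (1 - l) • x₀ + l • c) '' C := by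
    intro ε hε
    have hev : ∀ᶠ n in atTop, x₀ + ε • (‖f n‖⁻¹ • f n) ∉ C := by
      by_contra h
      rw [Filter.not_eventually] at h
      have hcl : x₀ + ε • yhat ∈ closure C := by
        refine mem_closure_of_frequently_of_tendsto
          (h.mono fun n hn => not_not.mp hn) ?_
        exact Tendsto.const_add _ (hgy.const_smul ε)
      exact hdir ε hε (hCclosed.closure_subset hcl)
    obtain ⟨n, hfn0, hnot⟩ := (hne.and hev).exists
    -- setup for this n
    have htn : 0 < t n := by
      rcases (ht n).lt_or_eq with h | h
      · exact h
      · exfalso; apply hfn0; rw [hf n, ← h, zero_smul]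
    set d := c n - x₀ with hd
    have hd0 : d ≠ 0 := by
      intro h
      apply hfn0
      rw [hf n, ← hd, h, smul_zero]
    have hdn : (0:ℝ) < ‖d‖ := norm_pos_iff.mpr hd0
    -- the normalized direction agrees
    have hud : ‖f n‖⁻¹ • f n = ‖d‖⁻¹ • d := by
      rw [hf n, ← hd, norm_smul, Real.norm_eq_abs, abs_of_pos htn, smul_smul,
        mul_inv]
      congr 1
      field_simp
    rw [hud] at hnot
    -- the set of admissible steps along d
    set S := {s : ℝ | 0 ≤ s ∧ x₀ + s • d ∈ C} with hS
    have h1S : (1:ℝ) ∈ S := by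
      constructor
      · norm_num
      · rw [one_smul, hd]; simpa using hc n
    have hIv : ∀ s ∈ S, ∀ s' : ℝ, 0 ≤ s' → s' ≤ s → s' ∈ S := by
      rintro s ⟨hs0, hsC⟩ s' hs'0 hs's
      refine ⟨hs'0, ?_⟩
      rcases eq_or_lt_of_le hs0 with h | hspos
      · have : s' = 0 := le_antisymm (hs's.trans h.symm.le) hs'0
        rw [this, zero_smul, add_zero]; exact hx₀
      · have key := hCconv hx₀ hsC (a := 1 - s'/s) (b := s'/s)
          (by
            have : s'/s ≤ 1 := (div_le_one hspos).mpr hs's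
            linarith)
          (by positivity) (by ring)
        have : (1 - s'/s) • x₀ + (s'/s) • (x₀ + s • d) = x₀ + s' • d := by
          rw [smul_add, smul_smul, div_mul_cancel₀ _ hspos.ne']
          module
        rwa [this] at key
    have hbd : ∀ s ∈ S, s ≤ ε / ‖d‖ := by
      intro s hsS
      by_contra h
      push_neg at h
      have hmem : ε / ‖d‖ ∈ S := hIv s hsS _ (by positivity) h.le
      apply hnot
      have : (ε / ‖d‖) • d = ε • (‖d‖⁻¹ • d) := by
        rw [smul_smul, div_eq_mul_inv]
      rw [← this]
      exact hmem.2
    have hSbdd : BddAbove S := ⟨ε / ‖d‖, fun s hs => hbd s hs⟩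
    have hSclosed : IsClosed S := by
      have : S = Ici (0:ℝ) ∩ (fun s : ℝ => x₀ + s • d) ⁻¹' C := by
        ext s; simp [hS, and_comm]
      rw [this]
      exact isClosed_Ici.inter (hCclosed.preimage (by continuity))
    set σ := sSup S with hσ
    have hσS : σ ∈ S := hSclosed.csSup_mem ⟨1, h1S⟩ hSbdd
    have hσ1 : (1:ℝ) ≤ σ := le_csSup hSbdd h1S
    have hσpos : (0:ℝ) < σ := lt_of_lt_of_le one_pos hσ1
    refine ⟨x₀ + σ • d, hσS.2, ?_, ?_⟩
    · rw [add_sub_cancel_left, norm_smul, Real.norm_eq_abs, abs_of_pos hσpos]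
      calc σ * ‖d‖ ≤ (ε / ‖d‖) * ‖d‖ := by
            exact mul_le_mul_of_nonneg_right (hbd σ hσS) hdn.le
        _ = ε := div_mul_cancel₀ _ hdn.ne'
    · rintro l ⟨hl0, hl1⟩ ⟨c', hc', heq⟩
      simp only at heq
      have hlne : l ≠ 0 := hl0.ne'
      have hc'eq : c' = x₀ + (σ / l) • d := by
        apply smul_right_injective X hlne
        simp only
        have h2 : l • (x₀ + (σ / l) • d) = l • x₀ + σ • d := by
          rw [smul_add, smul_smul, mul_div_cancel₀ _ hlne]
        rw [h2]
        have h3 : l • c' = x₀ + σ • d - (1 - l) • x₀ := by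
          rw [← heq]; abel
        rw [h3, sub_smul, one_smul]; abel
      have hmem : σ / l ∈ S := by
        refine ⟨by positivity, ?_⟩
        rw [← hc'eq]; exact hc'
      have hle : σ / l ≤ σ := le_csSup hSbdd hmem
      have : σ < σ / l := by
        rw [lt_div_iff₀ hl0]
        nlinarith
      linarith
  -- build the sequence
  choose e he hnorm hl using fun m : ℕ => A (1 / (m + 1)) (by positivity)
  refine ⟨e, ?_, fun m => ⟨he m, hl m⟩⟩
  rw [tendsto_iff_norm_sub_tendsto_zero]
  refine squeeze_zero (fun m => norm_nonneg _) hnorm ?_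
  exact tendsto_one_div_add_atTop_nhds_zero_nat
end
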